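/- arXiv:1004.1620 — 5 statements merged into one kernel-verified Lean document; each statement's English description precedes it below -/
import Mathlib

section
/- Let Q and R be subgroups of P, let φ and φ' be two distinct elements of F(Q,R), let {Q_i}_{i∈I} and {R_i}_{i∈I} be finite families of subgroups of P and, for each i ∈ I, let φ_i and φ'_i be two distinct elements of F(Q_i,R_i), μ_i ∈ F(Q,Q_i) and ν_i ∈ F(R_i,R). If φ' − φ = Σ_{i∈I} μ_i∘(φ'_i − φ_i)∘ν_i holds in ℤF(Q,R), then there exist n ∈ ℕ and an injective map σ: {0,1,…,n} → I such that φ = μ_{σ(0)}∘φ_{σ(0)}∘ν_{σ(0)}, μ_{σ(ℓ−1)}∘φ'_{σ(ℓ−1)}∘ν_{σ(ℓ−1)} = μ_{σ(ℓ)}∘φ_{σ(ℓ)}∘ν_{σ(ℓ)} for every 1 ≤ ℓ ≤ n, and μ_{σ(n)}∘φ'_{σ(n)}∘ν_{σ(n)} = φ'. -/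
namespace Puig

variable {G : Type*} [Group G]

/-- The conjugation morphism `x ↦ u x u⁻¹` from `R` to `Q`. -/
def conjMap {Q R : Subgroup G} (u : G) (h : ∀ x ∈ R, u * x * u⁻¹ ∈ Q) : ↥R →* ↥Q where
  toFun x := ⟨u * x * u⁻¹, h x x.2⟩
  map_one' := by ext; simp
  map_mul' x y := by ext; simp

/-- The data of a `P`-category: a set of morphisms for each pair of subgroups. -/
structure PCat (G : Type*) [Group G] where
  Hom : ∀ _Q _R : Subgroup G, Set (↥_R →* ↥_Q)

/-- `F` is a divisible `P`-category. -/
structure PCat.IsDivisible (F : PCat G) : Prop where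
  inj : ∀ ⦃Q R : Subgroup G⦄ ⦃φ : ↥R →* ↥Q⦄, φ ∈ F.Hom Q R → Function.Injective φ
  conj_mem : ∀ ⦃Q R : Subgroup G⦄ (u : G) (h : ∀ x ∈ R, u * x * u⁻¹ ∈ Q),
    conjMap u h ∈ F.Hom Q R
  comp_mem : ∀ ⦃Q R T : Subgroup G⦄ ⦃φ : ↥R →* ↥Q⦄ ⦃ψ : ↥T →* ↥R⦄,
    φ ∈ F.Hom Q R → ψ ∈ F.Hom R T → φ.comp ψ ∈ F.Hom Q T
  div : ∀ ⦃Q R T : Subgroup G⦄ ⦃φ : ↥R →* ↥Q⦄ (ψ : ↥T →* ↥R), φ ∈ F.Hom Q R →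
    (φ.comp ψ ∈ F.Hom Q T ↔ ψ ∈ F.Hom R T)

/-- The image `φ(Q) ≤ G` of a morphism `φ : Q → R` between subgroups of `G`. -/
def img {Q R : Subgroup G} (φ : ↥Q →* ↥R) : Subgroup G := φ.range.map R.subtype

/-- The corestriction `Q → φ(Q)` of a morphism `φ`. -/
def toImg {Q R : Subgroup G} (φ : ↥Q →* ↥R) : ↥Q →* ↥(img φ) where
  toFun x := ⟨(φ x : G), Subgroup.mem_map_of_mem R.subtype ⟨x, rfl⟩⟩
  map_one' := by ext; simp
  map_mul' x y := by ext; simp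

/-- Restriction of a morphism along an inclusion of subgroups. -/
def restrHom {A B C : Subgroup G} (ψ : ↥A →* ↥C) (h : B ≤ A) : ↥B →* ↥C :=
  ψ.comp (Subgroup.inclusion h)

/-- The inclusion morphism `ι_A^P : A → P`. -/
def inclP (A : Subgroup G) : ↥A →* ↥(⊤ : Subgroup G) := Subgroup.inclusion le_top

/-- The automorphism of `Q` induced by conjugation by `u ∈ N_G(Q)`. -/
def conjAut (Q : Subgroup G) (u : ↥(Subgroup.normalizer (Q : Set G))) : MulAut ↥Q where
  toFun x := ⟨(u : G) * x * (u : G)⁻¹, (Subgroup.mem_normalizer_iff.mp u.2 x).mp x.2⟩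
  invFun x := ⟨(u : G)⁻¹ * x * (u : G),
    (Subgroup.mem_normalizer_iff.mp u.2 ((u : G)⁻¹ * x * (u : G))).mpr
      (by simpa [mul_assoc] using x.2)⟩
  left_inv x := by ext; simp [mul_assoc]
  right_inv x := by ext; simp [mul_assoc]
  map_mul' x y := by ext; simp

/-- The homomorphism `N_G(Q) → Aut(Q)` given by conjugation. -/
def conjHomN (Q : Subgroup G) : ↥(Subgroup.normalizer (Q : Set G)) →* MulAut ↥Q where
  toFun := conjAut Q
  map_one' := by ext x; simp [conjAut]
  map_mul' u v := by ext x; simp [conjAut, mul_assoc]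

/-- `F_R(Q)`: the group of automorphisms of `Q` induced by conjugation by elements of `R`. -/
def conjF (R Q : Subgroup G) : Subgroup (MulAut ↥Q) :=
  (R.subgroupOf (Subgroup.normalizer (Q : Set G))).map (conjHomN Q)

/-- `F(Q)`: the group of `F`-automorphisms of `Q`. -/
def FAut (F : PCat G) (Q : Subgroup G) : Subgroup (MulAut ↥Q) :=
  Subgroup.closure {α : MulAut ↥Q | α.toMonoidHom ∈ F.Hom Q Q}

/-- `O_p(G)`: the largest normal `p`-subgroup of `G`. -/
def pCore (p : ℕ) (G : Type*) [Group G] : Subgroup G :=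
  sSup {H : Subgroup G | H.Normal ∧ IsPGroup p ↥H}

/-- `N_P^K(Q)`. -/
def NPK (Q : Subgroup G) (K : Subgroup (MulAut ↥Q)) : Subgroup G :=
  (K.comap (conjHomN Q)).map (Subgroup.normalizer (Q : Set G)).subtype

/-- `^φK`: the image of `K ≤ Aut Q` in `Aut (φ(Q))` under the isomorphism induced by `φ`. -/
def pushK {Q R : Subgroup G} (φ : ↥Q →* ↥R) (K : Subgroup (MulAut ↥Q)) :
    Subgroup (MulAut ↥(img φ)) :=
  Subgroup.closure {β | ∃ α ∈ K, ∀ x : ↥Q, β (toImg φ x) = toImg φ (α x)}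

/-- `φ*K'`: the pull-back of `K' ≤ Aut (φ(Q))` to `Aut Q` under the isomorphism induced by `φ`. -/
def pullK {Q R : Subgroup G} (φ : ↥Q →* ↥R) (K' : Subgroup (MulAut ↥(img φ))) :
    Subgroup (MulAut ↥Q) :=
  Subgroup.closure {α | ∃ β ∈ K', ∀ x : ↥Q, toImg φ (α x) = β (toImg φ x)}

/-- `Q` is fully `K`-normalized in `F`. -/
def FullyKNormalized (F : PCat G) (Q : Subgroup G) (K : Subgroup (MulAut ↥Q)) : Prop :=
  ∀ ψ ∈ F.Hom ⊤ (Q ⊔ NPK Q K),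
    img (restrHom ψ le_sup_right) =
      NPK (img (restrHom ψ le_sup_left)) (pushK (restrHom ψ le_sup_left) K)

/-- The triple `(Q, K, φ)` is extensile in `F`. -/
def Extensile (F : PCat G) (Q : Subgroup G) (K : Subgroup (MulAut ↥Q))
    (φ : ↥Q →* ↥(⊤ : Subgroup G)) : Prop :=
  ∃ ψ ∈ F.Hom ⊤ (Q ⊔ NPK Q K), ∃ χ : MulAut ↥Q, χ ∈ K ∧ χ.toMonoidHom ∈ F.Hom Q Q ∧
    ∀ u : ↥Q, restrHom ψ le_sup_left u = φ (χ u)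

/-- The Sylow condition: `F_P(P)` is a Sylow `p`-subgroup of `F(P)`. -/
def SylowCond (p : ℕ) (F : PCat G) : Prop :=
  ∃ S : Sylow p ↥(FAut F (⊤ : Subgroup G)),
    (S : Subgroup ↥(FAut F (⊤ : Subgroup G))) =
      (conjF (⊤ : Subgroup G) (⊤ : Subgroup G)).subgroupOf (FAut F (⊤ : Subgroup G))

/-- The extension condition for a Frobenius `P`-category. -/
def ExtensionCond (F : PCat G) : Prop :=
  ∀ (Q : Subgroup G) (K : Subgroup (MulAut ↥Q)) (φ : ↥Q →* ↥(⊤ : Subgroup G)),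
    φ ∈ F.Hom ⊤ Q → FullyKNormalized F (img φ) (pushK φ K) → Extensile F Q K φ

/-- `F` is a Frobenius `P`-category. -/
def IsFrobenius (p : ℕ) (F : PCat G) : Prop :=
  F.IsDivisible ∧ SylowCond p F ∧ ExtensionCond F

/-- The free ℤ-module on all morphisms from `R` to `Q`. -/
abbrev Zmod (Q R : Subgroup G) : Type _ := (↥R →* ↥Q) →₀ ℤ

/-- Bilinear composition on the free ℤ-modules of morphisms. -/
noncomputable def dcomp {Q R T : Subgroup G} (a : Zmod Q R) (b : Zmod R T) : Zmod Q T :=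
  a.sum fun φ m => b.sum fun ψ n => Finsupp.single (φ.comp ψ) (m * n)

/-- `ℤF(Q,R)`: the free ℤ-module with basis `F(Q,R)`. -/
noncomputable def ZF (F : PCat G) (Q R : Subgroup G) : Submodule ℤ (Zmod Q R) :=
  Finsupp.supported ℤ ℤ (F.Hom Q R)

/-- `w_F(Q)`: the kernel of the augmentation `ℤF(P,Q) → ℤ`. -/
noncomputable def wF (F : PCat G) (Q : Subgroup G) : Submodule ℤ (Zmod (⊤ : Subgroup G) Q) :=
  ZF F ⊤ Q ⊓ LinearMap.ker (Finsupp.linearCombination ℤ fun _ => (1 : ℤ))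

/-- `r_F(Q) = w_F(P)∘ℤF(P,Q) + Σ_{|R|>|Q|} w_F(R)∘ℤF(R,Q)`. -/
noncomputable def rF (F : PCat G) (Q : Subgroup G) : Submodule ℤ (Zmod (⊤ : Subgroup G) Q) :=
  Submodule.span ℤ {x | ∃ R : Subgroup G, (R = ⊤ ∨ Nat.card ↥Q < Nat.card ↥R) ∧
    ∃ a ∈ wF F R, ∃ b ∈ ZF F R Q, x = dcomp a b}

/-- `Q` is `F`-essential. -/
def IsEssential (F : PCat G) (Q : Subgroup G) : Prop := rF F Q ≠ wF F Q

/-- `Q` is `F`-selfcentralizing. -/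
def SelfCentralizing (F : PCat G) (Q : Subgroup G) : Prop :=
  ∀ φ ∈ F.Hom (⊤ : Subgroup G) Q,
    Subgroup.centralizer (img φ : Set G) = (Subgroup.center ↥(img φ)).map (img φ).subtype

/-- `Q` is `F`-radical. -/
def Radical (p : ℕ) (F : PCat G) (Q : Subgroup G) : Prop :=
  SelfCentralizing F Q ∧ (pCore p ↥(FAut F Q)).map (FAut F Q).subtype = conjF Q Q

/-- `Q` is `F`-intersected. -/
def Intersected (F : PCat G) (Q : Subgroup G) : Prop :=
  SelfCentralizing F Q ∧
    conjF Q Q = ⨅ φ : ↥(F.Hom (⊤ : Subgroup G) Q), pullK φ.1 (conjF ⊤ (img φ.1))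

/-- The Alperin condition on `F`. -/
def AlperinCond (p : ℕ) (F : PCat G) : Prop :=
  ∀ Q : Subgroup G, IsEssential F Q → Radical p F Q ∧
    ∀ φ ∈ F.Hom (⊤ : Subgroup G) Q, ∀ φ' ∈ F.Hom (⊤ : Subgroup G) Q,
      ∃ σ ∈ F.Hom Q Q,
        Finsupp.single φ' (1 : ℤ) - Finsupp.single (φ.comp σ) 1 ∈ rF F Q

/-- The subgroup of `G` corresponding to a subgroup of a subgroup `N ≤ G`. -/
def liftSub {N : Subgroup G} (A : Subgroup ↥N) : Subgroup G := A.map N.subtype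

/-- The category `N_F^K(Q)` over the group `N_P^K(Q)`. -/
def NFK (F : PCat G) (Q : Subgroup G) (K : Subgroup (MulAut ↥Q)) : PCat ↥(NPK Q K) where
  Hom A B := {φ : ↥B →* ↥A | ∃ ψ ∈ F.Hom (Q ⊔ liftSub A) (Q ⊔ liftSub B), ∃ χ ∈ K,
    (∀ (x : G) (hxQ : x ∈ Q) (hx : x ∈ Q ⊔ liftSub B),
      ((ψ ⟨x, hx⟩ : ↥(Q ⊔ liftSub A)) : G) = ((χ ⟨x, hxQ⟩ : ↥Q) : G)) ∧
    (∀ (y : ↥B) (hy : ((y : ↥(NPK Q K)) : G) ∈ Q ⊔ liftSub B),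
      ((ψ ⟨((y : ↥(NPK Q K)) : G), hy⟩ : ↥(Q ⊔ liftSub A)) : G) =
        (((φ y : ↥A) : ↥(NPK Q K)) : G))}

/-- A generator family for `w_F`. -/
def GenFamily (F : PCat G) (S : ∀ Q : Subgroup G, Set (Zmod (⊤ : Subgroup G) Q)) : Prop :=
  (∀ Q : Subgroup G, Q ≠ ⊤ → S Q ⊆ (wF F Q : Set (Zmod (⊤ : Subgroup G) Q))) ∧
  ∀ Q : Subgroup G, Q ≠ ⊤ →
    wF F Q = Submodule.span ℤ {x | ∃ R : Subgroup G, R ≠ ⊤ ∧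
      ∃ a ∈ S R, ∃ φ ∈ F.Hom R Q, x = dcomp a (Finsupp.single φ (1 : ℤ))}

/-- `F^𝔛` is a partial Frobenius `P`-category. -/
def PartialFrobenius (p : ℕ) (F : PCat G) (X : Set (Subgroup G)) : Prop :=
  SylowCond p F ∧ ∀ Q ∈ X, ∀ (K : Subgroup (MulAut ↥Q)) (φ : ↥Q →* ↥(⊤ : Subgroup G)),
    φ ∈ F.Hom ⊤ Q → FullyKNormalized F (img φ) (pushK φ K) → Extensile F Q K φ

/-- The closure condition on the set of subgroups `𝔛`. -/
def XClosed (F : PCat G) (X : Set (Subgroup G)) : Prop :=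
  X.Nonempty ∧ ∀ Q : Subgroup G, (∃ R ∈ X, (F.Hom Q R).Nonempty) → Q ∈ X

private lemma chain_lemma {α : Type*} {I : Type*} :
    ∀ (s : Finset I) (x y : α), x ≠ y →
    ∀ (a b : I → α),
    ((Finsupp.single y (1:ℤ)) - Finsupp.single x 1 =
      ∑ i ∈ s, (Finsupp.single (b i) (1:ℤ) - Finsupp.single (a i) 1)) →
    ∃ (n : ℕ) (σ : Fin (n+1) → I), Function.Injective σ ∧ (∀ ℓ, σ ℓ ∈ s) ∧
      a (σ 0) = x ∧ (∀ ℓ : Fin n, b (σ ℓ.castSucc) = a (σ ℓ.succ)) ∧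
      b (σ (Fin.last n)) = y := by
  classical
  intro s
  induction s using Finset.strongInduction with
  | _ s IH =>
    intro x y hxy a b heq
    have hex : ∃ i ∈ s, a i = x := by
      by_contra hc
      push_neg at hc
      have h1 := congrArg (fun f => f x) heq
      simp only [Finsupp.sub_apply, Finsupp.finset_sum_apply, Finsupp.single_apply] at h1
      rw [if_neg (fun h => hxy h.symm)] at h1
      have h2 : ∀ i ∈ s, ((if b i = x then (1:ℤ) else 0) - (if a i = x then 1 else 0)) =
          (if b i = x then (1:ℤ) else 0) := by
        intro i hi; rw [if_neg (hc i hi), sub_zero]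
      rw [Finset.sum_congr rfl h2, if_pos trivial, zero_sub] at h1
      have h3 : (0:ℤ) ≤ ∑ i ∈ s, (if b i = x then (1:ℤ) else 0) :=
        Finset.sum_nonneg fun i _ => by positivity
      linarith
    obtain ⟨i, hi, hai⟩ := hex
    have hsplit : Finsupp.single y (1:ℤ) - Finsupp.single (b i) 1 =
        ∑ j ∈ s.erase i, (Finsupp.single (b j) (1:ℤ) - Finsupp.single (a j) 1) := by
      rw [← Finset.add_sum_erase _ _ hi, hai] at heq
      rw [add_comm] at heq
      rw [← sub_eq_iff_eq_add] at heq
      rw [← heq]; abel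
    by_cases hby : b i = y
    · exact ⟨0, fun _ => i, (fun p q _ => by have := p.isLt; have := q.isLt; ext; omega),
        fun _ => hi, hai, fun ℓ => ℓ.elim0, hby⟩
    · obtain ⟨n, σ, hinj, hmem, h0, hchain, hlast⟩ :=
        IH (s.erase i) (Finset.erase_ssubset hi) (b i) y hby a b hsplit
      refine ⟨n + 1, Fin.cons i σ, ?_, ?_, ?_, ?_, ?_⟩
      · rw [Fin.cons_injective_iff]
        refine ⟨?_, hinj⟩
        rintro ⟨ℓ, rfl⟩
        exact (Finset.ne_of_mem_erase (hmem ℓ)) rfl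
      · intro ℓ
        refine Fin.cases ?_ ?_ ℓ
        · simpa using hi
        · intro j; rw [Fin.cons_succ]; exact Finset.mem_of_mem_erase (hmem j)
      · simpa using hai
      · intro ℓ
        refine Fin.cases ?_ ?_ ℓ
        · simp only [Fin.castSucc_zero, Fin.cons_zero, Fin.cons_succ]
          exact h0.symm
        · intro j
          rw [← Fin.succ_castSucc, Fin.cons_succ, Fin.cons_succ]
          exact hchain j
      · rw [← Fin.succ_last, Fin.cons_succ]; exact hlast

private lemma dcomp_single_single {Q R T : Subgroup G} (f : ↥R →* ↥Q) (g : ↥T →* ↥R)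
    (m n : ℤ) :
    dcomp (Finsupp.single f m) (Finsupp.single g n) = Finsupp.single (f.comp g) (m * n) := by
  unfold dcomp
  rw [Finsupp.sum_single_index (by simp), Finsupp.sum_single_index (by simp)]

private lemma dcomp_sub_left {Q R T : Subgroup G} (a a' : Zmod Q R) (b : Zmod R T) :
    dcomp (a - a') b = dcomp a b - dcomp a' b := by
  unfold dcomp
  apply Finsupp.sum_sub_index
  intro φ m1 m2
  rw [← Finsupp.sum_sub]
  exact Finsupp.sum_congr fun ψ _ => by rw [sub_mul, Finsupp.single_sub]

private lemma dcomp_single_sub {Q R T : Subgroup G} (f : ↥R →* ↥Q) (m : ℤ) (b b' : Zmod R T) :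
    dcomp (Finsupp.single f m) (b - b') =
      dcomp (Finsupp.single f m) b - dcomp (Finsupp.single f m) b' := by
  unfold dcomp
  rw [Finsupp.sum_single_index (by simp), Finsupp.sum_single_index (by simp),
    Finsupp.sum_single_index (by simp)]
  apply Finsupp.sum_sub_index
  intro ψ n1 n2
  rw [mul_sub, Finsupp.single_sub]

/-- **Lemma 1.5** (the "only if" direction): a linear decomposition of an `F`-dimorphism into
`F`-dimorphisms yields an Alperin-type chain of equalities. -/
theorem dimorphism_decomposition_chain
    (p : ℕ) [Fact p.Prime] {P : Type*} [Group P] [Finite P] (hP : IsPGroup p P)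
    (F : PCat P) (hF : F.IsDivisible)
    {Q R : Subgroup P} {φ φ' : ↥R →* ↥Q}
    (hφ : φ ∈ F.Hom Q R) (hφ' : φ' ∈ F.Hom Q R) (hne : φ ≠ φ')
    {I : Type*} [Fintype I] (Qi Ri : I → Subgroup P)
    (φi φi' : ∀ i, ↥(Ri i) →* ↥(Qi i))
    (hφi : ∀ i, φi i ∈ F.Hom (Qi i) (Ri i)) (hφi' : ∀ i, φi' i ∈ F.Hom (Qi i) (Ri i))
    (hnei : ∀ i, φi i ≠ φi' i)
    (μ : ∀ i, ↥(Qi i) →* ↥Q) (hμ : ∀ i, μ i ∈ F.Hom Q (Qi i))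
    (ν : ∀ i, ↥R →* ↥(Ri i)) (hν : ∀ i, ν i ∈ F.Hom (Ri i) R)
    (heq : Finsupp.single φ' (1 : ℤ) - Finsupp.single φ 1 =
      ∑ i, dcomp (Finsupp.single (μ i) (1 : ℤ))
        (dcomp (Finsupp.single (φi' i) (1 : ℤ) - Finsupp.single (φi i) 1)
          (Finsupp.single (ν i) (1 : ℤ)))) :
    ∃ (n : ℕ) (σ : Fin (n + 1) → I), Function.Injective σ ∧
      φ = (μ (σ 0)).comp ((φi (σ 0)).comp (ν (σ 0))) ∧
      (∀ ℓ : Fin n,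
        (μ (σ ℓ.castSucc)).comp ((φi' (σ ℓ.castSucc)).comp (ν (σ ℓ.castSucc))) =
          (μ (σ ℓ.succ)).comp ((φi (σ ℓ.succ)).comp (ν (σ ℓ.succ)))) ∧
      (μ (σ (Fin.last n))).comp ((φi' (σ (Fin.last n))).comp (ν (σ (Fin.last n)))) = φ' := by
  classical
  have hterm : ∀ i : I, dcomp (Finsupp.single (μ i) (1:ℤ))
      (dcomp (Finsupp.single (φi' i) (1:ℤ) - Finsupp.single (φi i) 1)
        (Finsupp.single (ν i) 1)) =
      Finsupp.single ((μ i).comp ((φi' i).comp (ν i))) (1:ℤ) -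
        Finsupp.single ((μ i).comp ((φi i).comp (ν i))) 1 := by
    intro i
    rw [dcomp_sub_left, dcomp_single_single, dcomp_single_single, dcomp_single_sub,
      dcomp_single_single, dcomp_single_single]
    simp only [one_mul, mul_one]
  rw [Finset.sum_congr rfl (fun i _ => hterm i)] at heq
  obtain ⟨n, σ, hinj, _, h0, hchain, hlast⟩ :=
    chain_lemma Finset.univ φ φ' hne _ _ heq
  exact ⟨n, σ, hinj, h0.symm, hchain, hlast⟩

end Puig
end

section
/- Let F be a divisible P-category. If Q is an F-radical subgroup of P, then Q is an F-intersected subgroup of P. -/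
namespace Puig

variable {G : Type*} [Group G]

/-- Helper: characterization of membership in `conjF ⊤ R`. -/
lemma mem_conjF_top_iff (R : Subgroup G) (β : MulAut ↥R) :
    β ∈ conjF ⊤ R ↔ ∃ v ∈ Subgroup.normalizer (R : Set G), ∀ y : ↥R, ((β y : ↥R) : G) = v * y * v⁻¹ := by
  constructor
  · rintro ⟨u, -, rfl⟩
    exact ⟨u, u.2, fun y => rfl⟩
  · rintro ⟨v, hv, hrel⟩
    exact ⟨⟨v, hv⟩, by simp [Subgroup.mem_subgroupOf],
      MulEquiv.ext fun y => Subtype.ext (hrel y).symm⟩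

/-- Helper: characterization of membership in `pullK ψ (conjF ⊤ (img ψ))`. -/
lemma mem_pullK_conjF_top_iff {Q : Subgroup G} (ψ : ↥Q →* ↥(⊤ : Subgroup G)) (α : MulAut ↥Q) :
    α ∈ pullK ψ (conjF ⊤ (img ψ)) ↔
      ∃ v ∈ Subgroup.normalizer ((img ψ : Subgroup G) : Set G),
        ∀ x : ↥Q, ((ψ (α x) : ↥(⊤ : Subgroup G)) : G)
          = v * ((ψ x : ↥(⊤ : Subgroup G)) : G) * v⁻¹ := by
  have hcoe : ∀ z : ↥Q, ((toImg ψ z : ↥(img ψ)) : G) = ((ψ z : ↥(⊤ : Subgroup G)) : G) :=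
    fun z => rfl
  let T : Subgroup (MulAut ↥Q) :=
  { carrier := {α | ∃ v ∈ Subgroup.normalizer ((img ψ : Subgroup G) : Set G),
      ∀ x : ↥Q, ((ψ (α x) : ↥(⊤ : Subgroup G)) : G)
        = v * ((ψ x : ↥(⊤ : Subgroup G)) : G) * v⁻¹}
    one_mem' := ⟨1, one_mem _, by simp⟩
    mul_mem' := by
      rintro a b ⟨v, hv, hva⟩ ⟨w, hw, hwb⟩
      refine ⟨v * w, mul_mem hv hw, fun x => ?_⟩
      have := hva (b x)
      simp only [MulAut.mul_apply] at *
      rw [this, hwb x]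
      group
    inv_mem' := by
      rintro a ⟨v, hv, hva⟩
      refine ⟨v⁻¹, inv_mem hv, fun x => ?_⟩
      have := hva (a⁻¹ x)
      rw [show a (a⁻¹ x) = x from MulAut.apply_inv_self _ a x] at this
      rw [this]; group }
  constructor
  · intro h
    refine Subgroup.closure_le T |>.mpr ?_ h
    rintro a ⟨β, hβ, hcomm⟩
    obtain ⟨v, hv, hrel⟩ := (mem_conjF_top_iff _ β).mp hβ
    refine ⟨v, hv, fun x => ?_⟩
    have h1 : ((toImg ψ (a x) : ↥(img ψ)) : G) = ((β (toImg ψ x) : ↥(img ψ)) : G) := by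
      rw [hcomm x]
    rw [← hcoe, h1, hrel, hcoe]
  · rintro ⟨v, hv, hrel⟩
    apply Subgroup.subset_closure
    refine ⟨conjHomN (img ψ) ⟨v, hv⟩,
      (mem_conjF_top_iff _ _).mpr ⟨v, hv, fun y => rfl⟩, fun x => ?_⟩
    exact Subtype.ext (hrel x)

/-- Helper: every element of `FAut F Q` is an `F`-automorphism. -/
lemma toMonoidHom_mem_of_mem_FAut (F : PCat G) (hF : F.IsDivisible) (Q : Subgroup G)
    {σ : MulAut ↥Q} (hσ : σ ∈ FAut F Q) : σ.toMonoidHom ∈ F.Hom Q Q := by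
  have hone : (1 : MulAut ↥Q).toMonoidHom ∈ F.Hom Q Q := by
    have h1 : ∀ x ∈ Q, (1 : G) * x * (1 : G)⁻¹ ∈ Q := fun x hx => by simpa using hx
    have : conjMap (1 : G) h1 = (1 : MulAut ↥Q).toMonoidHom :=
      MonoidHom.ext fun x => Subtype.ext (by simp [conjMap])
    rw [← this]
    exact hF.conj_mem 1 h1
  let A : Subgroup (MulAut ↥Q) :=
  { carrier := {α | α.toMonoidHom ∈ F.Hom Q Q}
    one_mem' := hone
    mul_mem' := by
      intro a b ha hb
      have : (a * b).toMonoidHom = a.toMonoidHom.comp b.toMonoidHom :=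
        MonoidHom.ext fun x => rfl
      rw [Set.mem_setOf_eq, this]
      exact hF.comp_mem ha hb
    inv_mem' := by
      intro a ha
      have hcomp : a.toMonoidHom.comp a⁻¹.toMonoidHom = (1 : MulAut ↥Q).toMonoidHom :=
        MonoidHom.ext fun x => MulAut.apply_inv_self _ a x
      have : a.toMonoidHom.comp a⁻¹.toMonoidHom ∈ F.Hom Q Q := by rw [hcomp]; exact hone
      exact (hF.div a⁻¹.toMonoidHom ha).mp this }
  exact (Subgroup.closure_le A).mpr (fun α hα => hα) hσ

/-- An `F`-radical subgroup of `P` is an `F`-intersected subgroup of `P`. -/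
theorem radical_is_intersected
    (p : ℕ) [Fact p.Prime] {P : Type*} [Group P] [Finite P] (hP : IsPGroup p P)
    (F : PCat P) (hF : F.IsDivisible)
    (Q : Subgroup P) (hQ : Radical p F Q) : Intersected F Q := by
  obtain ⟨hsc, hrad⟩ := hQ
  refine ⟨hsc, ?_⟩
  set K := ⨅ φ : ↥(F.Hom (⊤ : Subgroup P) Q), pullK φ.1 (conjF ⊤ (img φ.1)) with hK
  have hQtop : Q ≤ (⊤ : Subgroup P) := le_top
  have h1Q : ∀ x ∈ Q, (1 : P) * x * (1 : P)⁻¹ ∈ (⊤ : Subgroup P) := fun x _ => trivial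
  have hincl_eq : conjMap (1 : P) h1Q = Subgroup.inclusion hQtop :=
    MonoidHom.ext fun x => Subtype.ext (by simp [conjMap, Subgroup.inclusion])
  set ι : ↥Q →* ↥(⊤ : Subgroup P) := Subgroup.inclusion hQtop with hιdef
  have hι : ι ∈ F.Hom ⊤ Q := hincl_eq ▸ hF.conj_mem 1 h1Q
  -- Direction 1 : conjF Q Q ≤ K
  have dir1 : conjF Q Q ≤ K := by
    refine le_iInf ?_
    rintro ⟨φ, hφ⟩ α hα
    obtain ⟨u, huQ, rfl⟩ := Subgroup.mem_map.mp hα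
    rw [mem_pullK_conjF_top_iff]
    have huQ' : (u : P) ∈ Q := Subgroup.mem_subgroupOf.mp huQ
    refine ⟨((φ ⟨(u : P), huQ'⟩ : ↥(⊤ : Subgroup P)) : P),
      Subgroup.le_normalizer (Subgroup.mem_map_of_mem _ ⟨⟨(u : P), huQ'⟩, rfl⟩), fun x => ?_⟩
    have hx : (conjHomN Q u) x = ⟨(u : P), huQ'⟩ * x * ⟨(u : P), huQ'⟩⁻¹ := Subtype.ext rfl
    rw [hx, map_mul, map_mul, map_inv]
    rfl
  -- K ≤ conjF ⊤ Q
  have hM : K ≤ conjF ⊤ Q := by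
    intro α hα
    have h1 := (mem_pullK_conjF_top_iff ι α).mp
      (iInf_le (fun φ : ↥(F.Hom (⊤ : Subgroup P) Q) => pullK φ.1 (conjF ⊤ (img φ.1)))
        ⟨ι, hι⟩ hα)
    obtain ⟨v, hv, hrel⟩ := h1
    have himg : img ι = Q := by
      ext y
      simp only [img, Subgroup.mem_map, MonoidHom.mem_range]
      constructor
      · rintro ⟨z, ⟨x, rfl⟩, rfl⟩
        exact x.2
      · intro hy
        exact ⟨ι ⟨y, hy⟩, ⟨⟨y, hy⟩, rfl⟩, rfl⟩
    rw [himg] at hv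
    refine (mem_conjF_top_iff Q α).mpr ⟨v, hv, fun y => ?_⟩
    have := hrel y
    simpa [hιdef, Subgroup.inclusion] using this
  -- K ≤ FAut F Q
  have hKF : K ≤ FAut F Q := by
    intro α hα
    obtain ⟨v, hv, hrel⟩ := (mem_conjF_top_iff Q α).mp (hM hα)
    have h' : ∀ x ∈ Q, v * x * v⁻¹ ∈ Q := fun x hx =>
      (Subgroup.mem_normalizer_iff.mp hv x).mp hx
    have heq : conjMap v h' = α.toMonoidHom :=
      MonoidHom.ext fun x => Subtype.ext (hrel x).symm
    exact Subgroup.subset_closure (show α.toMonoidHom ∈ F.Hom Q Q from heq ▸ hF.conj_mem v h')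
  -- K is "normalized" by FAut F Q
  have hnorm : ∀ σ ∈ FAut F Q, ∀ α ∈ K, σ * α * σ⁻¹ ∈ K := by
    intro σ hσ α hα
    have hσh := toMonoidHom_mem_of_mem_FAut F hF Q hσ
    rw [hK, Subgroup.mem_iInf]
    rintro ⟨φ, hφ⟩
    have hψ : φ.comp σ.toMonoidHom ∈ F.Hom ⊤ Q := hF.comp_mem hφ hσh
    have hαψ := (mem_pullK_conjF_top_iff (φ.comp σ.toMonoidHom) α).mp
      (Subgroup.mem_iInf.mp hα ⟨_, hψ⟩)
    obtain ⟨v, hv, hrel⟩ := hαψ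
    have himg2 : img (φ.comp σ.toMonoidHom) = img φ := by
      unfold img
      congr 1
      ext y
      simp only [MonoidHom.mem_range, MonoidHom.comp_apply]
      constructor
      · rintro ⟨x, rfl⟩
        exact ⟨σ x, rfl⟩
      · rintro ⟨x, rfl⟩
        exact ⟨σ⁻¹ x, by rw [show σ.toMonoidHom (σ⁻¹ x) = x from MulAut.apply_inv_self _ σ x]⟩
    rw [himg2] at hv
    refine (mem_pullK_conjF_top_iff φ _).mpr ⟨v, hv, fun x => ?_⟩
    have hr := hrel (σ⁻¹ x)
    simp only [MonoidHom.comp_apply] at hr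
    rw [show σ.toMonoidHom (σ⁻¹ x) = x from MulAut.apply_inv_self _ σ x] at hr
    simpa [MulAut.mul_apply] using hr
  -- package as a normal p-subgroup of FAut F Q
  set Kf := K.subgroupOf (FAut F Q) with hKfdef
  have hKfn : Kf.Normal := by
    constructor
    intro a ha g
    rw [hKfdef, Subgroup.mem_subgroupOf] at ha ⊢
    simpa using hnorm (g : MulAut ↥Q) g.2 (a : MulAut ↥Q) ha
  have hKfp : IsPGroup p ↥Kf := by
    have h0 : IsPGroup p ↥(Subgroup.normalizer (Q : Set P)) := hP.to_subgroup (Subgroup.normalizer (Q : Set P))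
    have h1 : IsPGroup p ↥((⊤ : Subgroup P).subgroupOf (Subgroup.normalizer (Q : Set P))) :=
      h0.to_subgroup _
    have h2 : IsPGroup p ↥(conjF ⊤ Q) := h1.map (conjHomN Q)
    have h3 : IsPGroup p ↥K := h2.to_le hM
    exact h3.of_equiv (Subgroup.subgroupOfEquivOfLe hKF).symm
  have hKle : Kf ≤ pCore p ↥(FAut F Q) := le_sSup ⟨hKfn, hKfp⟩
  have dir2 : K ≤ conjF Q Q := by
    have hmap := Subgroup.map_mono (f := (FAut F Q).subtype) hKle
    rw [hKfdef, Subgroup.subgroupOf_map_subtype, inf_of_le_left hKF, hrad] at hmap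
    exact hmap
  exact le_antisymm dir1 dir2

end Puig
end

section
/- Suppose the divisible P-category F fulfills the Alperin condition. Then for every proper subgroup R of P and every ψ ∈ F(P,R) there exist ℓ ∈ ℕ, subgroups U_0, …, U_ℓ of P, each of which is either F-essential or equal to P, and morphisms σ_i ∈ F(U_i) and ν_i ∈ F(U_i,R) for 0 ≤ i ≤ ℓ, such that ι_R^P = ι_{U_0}^P∘ν_0, ι_{U_{i−1}}^P∘σ_{i−1}∘ν_{i−1} = ι_{U_i}^P∘ν_i for all 1 ≤ i ≤ ℓ, and ι_{U_ℓ}^P∘σ_ℓ∘ν_ℓ = ψ (equalities of group homomorphisms R → P). -/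
namespace Puig

variable {G : Type*} [Group G]

/-! ### Auxiliary material for the proof of Alperin's fusion theorem -/

theorem incl_mem {F : PCat G} (hF : F.IsDivisible) {A B : Subgroup G} (h : A ≤ B) :
    Subgroup.inclusion h ∈ F.Hom B A := by
  have h1 : ∀ x ∈ A, (1:G) * x * 1⁻¹ ∈ B := by intro x hx; simpa using h hx
  have he : conjMap (1:G) h1 = Subgroup.inclusion h := by
    ext x; simp [conjMap]
  rw [← he]; exact hF.conj_mem 1 h1

theorem id_mem {F : PCat G} (hF : F.IsDivisible) (Q : Subgroup G) :
    MonoidHom.id ↥Q ∈ F.Hom Q Q := by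
  have h1 : ∀ x ∈ Q, (1:G) * x * 1⁻¹ ∈ Q := by intro x hx; simpa using hx
  have he : conjMap (1:G) h1 = MonoidHom.id ↥Q := by
    ext x; simp [conjMap]
  rw [← he]; exact hF.conj_mem 1 h1

theorem inclP_mem {F : PCat G} (hF : F.IsDivisible) (A : Subgroup G) :
    inclP A ∈ F.Hom ⊤ A := incl_mem hF le_top

/-- In a finite ambient group every `F`-endomorphism has an inverse in `F`. -/
theorem exists_inv [Finite G] {F : PCat G} (hF : F.IsDivisible) {Q : Subgroup G}
    {φ : ↥Q →* ↥Q} (hφ : φ ∈ F.Hom Q Q) :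
    ∃ ρ ∈ F.Hom Q Q, φ.comp ρ = MonoidHom.id ↥Q ∧ ρ.comp φ = MonoidHom.id ↥Q := by
  haveI : Finite (Monoid.End ↥Q) := Finite.of_injective _ DFunLike.coe_injective
  set e : Monoid.End ↥Q := φ with he
  have hmul : ∀ f g : Monoid.End ↥Q, f * g = MonoidHom.comp f g := fun _ _ => rfl
  have hpowmem : ∀ k : ℕ, (e ^ k : Monoid.End ↥Q) ∈ F.Hom Q Q := by
    intro k
    induction k with
    | zero => exact id_mem hF Q
    | succ n ih =>
        have h2 : (e ^ (n+1) : Monoid.End ↥Q) = MonoidHom.comp (e ^ n) e := by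
          rw [pow_succ]; rfl
        rw [h2]; exact hF.comp_mem ih hφ
  have key : ∀ m n : ℕ, m < n → (e ^ m : Monoid.End ↥Q) = e ^ n →
      ∃ ρ ∈ F.Hom Q Q, φ.comp ρ = MonoidHom.id ↥Q ∧ ρ.comp φ = MonoidHom.id ↥Q := by
    intro m n h hme
    have hinj : Function.Injective (e ^ m : Monoid.End ↥Q) := hF.inj (hpowmem m)
    have h1 : ∀ x, (e ^ m : Monoid.End ↥Q) ((e ^ (n - m) : Monoid.End ↥Q) x)
        = (e ^ m : Monoid.End ↥Q) x := by
      intro x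
      have h2 : ((e ^ m * e ^ (n - m) : Monoid.End ↥Q)) x = (e ^ m : Monoid.End ↥Q) x := by
        rw [← pow_add, Nat.add_sub_cancel' h.le, ← hme]
      exact h2
    have hk : (e ^ (n - m) : Monoid.End ↥Q) = 1 :=
      DFunLike.ext _ _ fun x => hinj (h1 x)
    have hk1 : 1 ≤ n - m := by omega
    refine ⟨e ^ (n - m - 1), hpowmem _, ?_, ?_⟩
    · have : φ.comp (e ^ (n - m - 1)) = (e ^ (n - m) : Monoid.End ↥Q) := by
        show e * e ^ (n - m - 1) = e ^ (n - m)
        rw [← pow_succ']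
        congr 1
        omega
      rw [this, hk]; rfl
    · have : MonoidHom.comp (e ^ (n - m - 1) : Monoid.End ↥Q) φ
          = (e ^ (n - m) : Monoid.End ↥Q) := by
        show e ^ (n - m - 1) * e = e ^ (n - m)
        rw [← pow_succ]
        congr 1
        omega
      rw [this, hk]; rfl
  obtain ⟨m, n, hmn, hme⟩ := Finite.exists_ne_map_eq_of_infinite (fun k : ℕ => (e ^ k : Monoid.End ↥Q))
  rcases lt_or_gt_of_ne hmn with h | h
  · exact key m n h hme
  · exact key n m h hme.symm

/-- The elementary step of Alperin's fusion theorem. -/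
def Step (F : PCat G) (R : Subgroup G) (χ χ' : ↥R →* ↥(⊤ : Subgroup G)) : Prop :=
  ∃ U : Subgroup G, (IsEssential F U ∨ U = ⊤) ∧
    ∃ ν ∈ F.Hom U R, ∃ σ ∈ F.Hom U U,
      (inclP U).comp ν = χ ∧ (inclP U).comp (σ.comp ν) = χ'

/-- The reachability relation generated by elementary steps. -/
def Reach (F : PCat G) (R : Subgroup G) :
    (↥R →* ↥(⊤ : Subgroup G)) → (↥R →* ↥(⊤ : Subgroup G)) → Prop :=
  Relation.ReflTransGen (Step F R)

theorem step_symm [Finite G] {F : PCat G} (hF : F.IsDivisible) {R : Subgroup G} :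
    Symmetric (Step F R) := by
  rintro χ χ' ⟨U, hU, ν, hν, σ, hσ, h1, h2⟩
  obtain ⟨ρ, hρ, hσρ, hρσ⟩ := exists_inv hF hσ
  refine ⟨U, hU, σ.comp ν, hF.comp_mem hσ hν, ρ, hρ, h2, ?_⟩
  refine MonoidHom.ext fun x => ?_
  have e1 := DFunLike.congr_fun hρσ (ν x)
  simp only [MonoidHom.comp_apply, MonoidHom.id_apply] at e1 ⊢
  rw [e1]
  exact DFunLike.congr_fun h1 x

theorem reach_symm [Finite G] {F : PCat G} (hF : F.IsDivisible) {R : Subgroup G} :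
    Symmetric (Reach F R) :=
  by
    show Symmetric (Relation.ReflTransGen (Step F R))
    haveI : Std.Symm (Step F R) := ⟨fun a b h => step_symm hF h⟩
    exact fun a b h => (Relation.ReflTransGen.symmetric : Std.Symm (Relation.ReflTransGen (Step F R))).symm a b h

theorem reach_comp {F : PCat G} (hF : F.IsDivisible) {T R : Subgroup G} {β : ↥R →* ↥T} (hβ : β ∈ F.Hom T R)
    {χ χ' : ↥T →* ↥(⊤ : Subgroup G)} (h : Reach F T χ χ') :
    Reach F R (χ.comp β) (χ'.comp β) := by
  refine Relation.ReflTransGen.lift (fun χ : ↥T →* ↥(⊤ : Subgroup G) => χ.comp β) (fun a b hab => ?_) _ _ h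
  obtain ⟨U, hU, ν, hν, σ, hσ, h1, h2⟩ := hab
  exact show Step F R (a.comp β) (b.comp β) from ⟨U, hU, ν.comp β, hF.comp_mem hν hβ, σ, hσ,
    MonoidHom.ext fun x => DFunLike.congr_fun h1 (β x),
    MonoidHom.ext fun x => DFunLike.congr_fun h2 (β x)⟩
theorem inclP_top_comp {R : Subgroup G} (χ : ↥R →* ↥(⊤ : Subgroup G)) :
    (inclP (⊤ : Subgroup G)).comp χ = χ := by
  ext x; rfl

theorem step_top [Finite G] {F : PCat G} (hF : F.IsDivisible) {R : Subgroup G}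
    {φ φ' : ↥(⊤ : Subgroup G) →* ↥(⊤ : Subgroup G)} (hφ : φ ∈ F.Hom ⊤ ⊤) (hφ' : φ' ∈ F.Hom ⊤ ⊤)
    {β : ↥R →* ↥(⊤ : Subgroup G)} (hβ : β ∈ F.Hom ⊤ R) :
    Step F R (φ.comp β) (φ'.comp β) := by
  obtain ⟨ρ, hρ, hφρ, hρφ⟩ := exists_inv hF hφ
  refine ⟨⊤, Or.inr rfl, φ.comp β, hF.comp_mem hφ hβ, φ'.comp ρ, hF.comp_mem hφ' hρ,
    inclP_top_comp _, ?_⟩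
  rw [inclP_top_comp]
  refine MonoidHom.ext fun x => ?_
  have e1 := DFunLike.congr_fun hρφ (β x)
  simp only [MonoidHom.comp_apply, MonoidHom.id_apply] at e1 ⊢
  rw [e1]

open Classical in
/-- The indicator function of the `Reach`-class of `inclP R`. -/
noncomputable def ind (F : PCat G) (R : Subgroup G) (χ : ↥R →* ↥(⊤ : Subgroup G)) : ℤ :=
  if Reach F R (inclP R) χ then 1 else 0

theorem ind_congr [Finite G] {F : PCat G} (hF : F.IsDivisible) {R : Subgroup G}
    {χ χ' : ↥R →* ↥(⊤ : Subgroup G)} (h : Reach F R χ χ') : ind F R χ = ind F R χ' := by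
  have hiff : Reach F R (inclP R) χ ↔ Reach F R (inclP R) χ' :=
    ⟨fun h' => h'.trans h, fun h' => h'.trans (reach_symm hF h)⟩
  by_cases h' : Reach F R (inclP R) χ
  · rw [ind, ind, if_pos h', if_pos (hiff.mp h')]
  · rw [ind, ind, if_neg h', if_neg (fun hc => h' (hiff.mpr hc))]

theorem ind_of_reach {F : PCat G} {R : Subgroup G} {χ : ↥R →* ↥(⊤ : Subgroup G)}
    (h : Reach F R (inclP R) χ) : ind F R χ = 1 := by
  simp only [ind, if_pos h]

theorem reach_of_ind {F : PCat G} {R : Subgroup G} {χ : ↥R →* ↥(⊤ : Subgroup G)}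
    (h : ind F R χ = 1) : Reach F R (inclP R) χ := by
  by_contra hc
  simp only [ind, if_neg hc] at h
  exact one_ne_zero h.symm

/-- The linear functional induced by the indicator function. -/
noncomputable def indMap (F : PCat G) (R : Subgroup G) :
    Zmod (⊤ : Subgroup G) R →ₗ[ℤ] ℤ :=
  Finsupp.linearCombination ℤ (ind F R)

theorem indMap_single {F : PCat G} {R : Subgroup G} (χ : ↥R →* ↥(⊤ : Subgroup G)) (c : ℤ) :
    indMap F R (Finsupp.single χ c) = c * ind F R χ := by
  rw [indMap, Finsupp.linearCombination_single, smul_eq_mul]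

/-- The key vanishing statement: assuming the inductive hypothesis for larger subgroups,
the indicator functional vanishes on `r_F(R)`. -/
theorem indMap_rF [Finite G] {F : PCat G} (hF : F.IsDivisible) {R : Subgroup G}
    (IH : ∀ T : Subgroup G, T ≠ ⊤ → Nat.card ↥R < Nat.card ↥T →
      ∀ φ ∈ F.Hom ⊤ T, Reach F T (inclP T) φ)
    {x : Zmod (⊤ : Subgroup G) R} (hx : x ∈ rF F R) : indMap F R x = 0 := by
  refine Submodule.span_induction ?_ (map_zero _) (fun a b _ _ ha hb => by
    rw [map_add, ha, hb, add_zero]) (fun c a _ ha => by rw [map_smul, ha, smul_zero]) hx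
  rintro x ⟨T, hT, a, ha, b, hb, rfl⟩
  obtain ⟨ha1, ha2⟩ := Submodule.mem_inf.mp ha
  have claim : ∀ φ ∈ F.Hom ⊤ T, ∀ β ∈ F.Hom T R,
      Reach F R (φ.comp β) ((inclP T).comp β) := by
    intro φ hφ β hβ
    rcases eq_or_ne T ⊤ with rfl | hTne
    · exact Relation.ReflTransGen.single (step_top hF hφ (inclP_mem hF ⊤) hβ)
    · have hTcard : Nat.card ↥R < Nat.card ↥T := by
        rcases hT with h | h
        · exact absurd h hTne
        · exact h
      exact reach_comp hF hβ (reach_symm hF (IH T hTne hTcard φ hφ))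
  have hasupp : ∀ φ ∈ a.support, φ ∈ F.Hom ⊤ T :=
    fun φ hφ => (Finsupp.mem_supported ℤ a).mp ha1 hφ
  have hbsupp : ∀ β ∈ b.support, β ∈ F.Hom T R :=
    fun β hβ => (Finsupp.mem_supported ℤ b).mp hb hβ
  have haug : (a.sum fun _ m => m) = (0 : ℤ) := by
    have h2 : Finsupp.linearCombination ℤ (fun _ => (1 : ℤ)) a = 0 := ha2
    rw [Finsupp.linearCombination_apply] at h2
    simpa using h2
  calc indMap F R (dcomp a b)
      = a.sum fun φ m => b.sum fun β n => (m * n) * ind F R (φ.comp β) := by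
        simp only [dcomp]
        rw [map_finsuppSum]
        refine Finsupp.sum_congr fun φ hφ => ?_
        rw [map_finsuppSum]
        exact Finsupp.sum_congr fun β hβ => indMap_single _ _
    _ = a.sum fun φ m => m * (b.sum fun β n => n * ind F R ((inclP T).comp β)) := by
        refine Finsupp.sum_congr fun φ hφ => ?_
        rw [Finsupp.mul_sum]
        refine Finsupp.sum_congr fun β hβ => ?_
        rw [ind_congr hF (claim φ (hasupp φ hφ) β (hbsupp β hβ)), mul_assoc]
    _ = (a.sum fun _ m => m) * (b.sum fun β n => n * ind F R ((inclP T).comp β)) := by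
        rw [Finsupp.sum_mul]
    _ = 0 := by rw [haug, zero_mul]
/-- The main induction: every morphism in `F(P,R)` for proper `R` is reachable from the
inclusion by elementary steps. -/
theorem reach_main [Finite G] {F : PCat G} (hF : F.IsDivisible) {p : ℕ}
    (hA : AlperinCond p F) :
    ∀ R : Subgroup G, R ≠ ⊤ → ∀ ψ ∈ F.Hom ⊤ R, Reach F R (inclP R) ψ := by
  have key : ∀ n : ℕ, ∀ R : Subgroup G, Nat.card ↥(⊤ : Subgroup G) - Nat.card ↥R = n →
      R ≠ ⊤ → ∀ ψ ∈ F.Hom ⊤ R, Reach F R (inclP R) ψ := by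
    intro n
    induction n using Nat.strong_induction_on with
    | _ n IHn =>
      intro R hn hR ψ hψ
      have IH : ∀ T : Subgroup G, T ≠ ⊤ → Nat.card ↥R < Nat.card ↥T →
          ∀ φ ∈ F.Hom ⊤ T, Reach F T (inclP T) φ := by
        intro T hTne hTcard
        have h1 : Nat.card ↥T ≤ Nat.card ↥(⊤ : Subgroup G) :=
          Subgroup.card_le_of_le le_top
        exact IHn (Nat.card ↥(⊤ : Subgroup G) - Nat.card ↥T) (by omega) T rfl hTne
      have hι : inclP R ∈ F.Hom ⊤ R := inclP_mem hF R
      by_cases hre : rF F R = wF F R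
      · have hx : Finsupp.single (inclP R) (1 : ℤ) - Finsupp.single ψ 1 ∈ wF F R := by
          refine Submodule.mem_inf.mpr ⟨?_, ?_⟩
          · exact sub_mem (Finsupp.single_mem_supported ℤ 1 hι)
              (Finsupp.single_mem_supported ℤ 1 hψ)
          · simp [LinearMap.mem_ker, map_sub, Finsupp.linearCombination_single]
        rw [← hre] at hx
        have h0 := indMap_rF hF IH hx
        rw [map_sub, indMap_single, indMap_single, one_mul, one_mul,
          ind_of_reach Relation.ReflTransGen.refl] at h0
        exact reach_of_ind (by omega)
      · obtain ⟨-, h2⟩ := hA R hre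
        obtain ⟨σ, hσ, hmem⟩ := h2 (inclP R) hι ψ hψ
        have h0 := indMap_rF hF IH hmem
        have hstep : Reach F R (inclP R) ((inclP R).comp σ) := by
          refine Relation.ReflTransGen.single ⟨R, Or.inl hre, MonoidHom.id ↥R, id_mem hF R,
            σ, hσ, MonoidHom.comp_id _, ?_⟩
          rw [MonoidHom.comp_id]
        rw [map_sub, indMap_single, indMap_single, one_mul, one_mul,
          ind_of_reach hstep] at h0
        exact reach_of_ind (by omega)
  intro R hR ψ hψ
  exact key _ R rfl hR ψ hψ

/-- Converting reachability into an explicit chain. -/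
theorem chain_of_reach [Finite G] {F : PCat G} (hF : F.IsDivisible) {R : Subgroup G}
    {ψ : ↥R →* ↥(⊤ : Subgroup G)} (hψ : ψ ∈ F.Hom ⊤ R) {χ : ↥R →* ↥(⊤ : Subgroup G)}
    (h : Reach F R χ ψ) :
    ∃ (ℓ : ℕ) (U : Fin (ℓ + 1) → Subgroup G)
      (σ : ∀ i, ↥(U i) →* ↥(U i)) (ν : ∀ i, ↥R →* ↥(U i)),
      (∀ i, IsEssential F (U i) ∨ U i = ⊤) ∧
      (∀ i, σ i ∈ F.Hom (U i) (U i)) ∧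
      (∀ i, ν i ∈ F.Hom (U i) R) ∧
      (inclP (U 0)).comp (ν 0) = χ ∧
      (∀ i : Fin ℓ,
        (inclP (U i.castSucc)).comp ((σ i.castSucc).comp (ν i.castSucc)) =
          (inclP (U i.succ)).comp (ν i.succ)) ∧
      (inclP (U (Fin.last ℓ))).comp ((σ (Fin.last ℓ)).comp (ν (Fin.last ℓ))) = ψ := by
  induction h using Relation.ReflTransGen.head_induction_on with
  | refl =>
      refine ⟨0, fun _ => ⊤, fun _ => MonoidHom.id _, fun _ => ψ, fun _ => Or.inr rfl,
        fun _ => id_mem hF ⊤, fun _ => hψ, inclP_top_comp ψ, fun i => i.elim0, ?_⟩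
      rw [MonoidHom.id_comp]
      exact inclP_top_comp ψ
  | head hstep _ ih =>
      obtain ⟨V, hV, μ, hμ, τ, hτ, hs1, hs2⟩ := hstep
      obtain ⟨ℓ, U, σ, ν, hUe, hσ, hν, hfirst, hmid, hlast⟩ := ih
      refine ⟨ℓ + 1, (Fin.cons V U : Fin (ℓ + 2) → Subgroup G),
        Fin.cons (α := fun i : Fin (ℓ + 2) =>
          ↥((Fin.cons V U : Fin (ℓ + 2) → Subgroup G) i) →*
          ↥((Fin.cons V U : Fin (ℓ + 2) → Subgroup G) i)) τ σ,
        Fin.cons (α := fun i : Fin (ℓ + 2) =>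
          ↥R →* ↥((Fin.cons V U : Fin (ℓ + 2) → Subgroup G) i)) μ ν, ?_, ?_, ?_, ?_, ?_, ?_⟩
      · exact Fin.cases hV hUe
      · exact Fin.cases hτ hσ
      · exact Fin.cases hμ hν
      · exact hs1
      · intro i
        refine Fin.cases ?_ (fun j => ?_) i
        · exact hs2.trans hfirst.symm
        · exact hmid j
      · exact hlast
/-- **Alperin's Fusion Theorem in `F`** (cf. [5, Corollary 5.14]): if `F` fulfills the Alperin
condition then every morphism `ψ ∈ F(P,R)`, for `R` a proper subgroup of `P`, decomposes
through a chain of `F`-essential subgroups of `P` (or `P` itself). -/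
theorem alperin_fusion_chain
    (p : ℕ) [Fact p.Prime] {P : Type*} [Group P] [Finite P] (hP : IsPGroup p P)
    (F : PCat P) (hF : F.IsDivisible) (hA : AlperinCond p F)
    (R : Subgroup P) (hR : R ≠ ⊤)
    (ψ : ↥R →* ↥(⊤ : Subgroup P)) (hψ : ψ ∈ F.Hom ⊤ R) :
    ∃ (ℓ : ℕ) (U : Fin (ℓ + 1) → Subgroup P)
      (σ : ∀ i, ↥(U i) →* ↥(U i)) (ν : ∀ i, ↥R →* ↥(U i)),
      (∀ i, IsEssential F (U i) ∨ U i = ⊤) ∧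
      (∀ i, σ i ∈ F.Hom (U i) (U i)) ∧
      (∀ i, ν i ∈ F.Hom (U i) R) ∧
      (inclP (U 0)).comp (ν 0) = inclP R ∧
      (∀ i : Fin ℓ,
        (inclP (U i.castSucc)).comp ((σ i.castSucc).comp (ν i.castSucc)) =
          (inclP (U i.succ)).comp (ν i.succ)) ∧
      (inclP (U (Fin.last ℓ))).comp ((σ (Fin.last ℓ)).comp (ν (Fin.last ℓ))) = ψ := by
  exact chain_of_reach hF hψ (reach_main hF hA R hR ψ hψ)

end Puig
end

section
/- Let F be a divisible P-category, let Q be a subgroup of P fully normalized in F, set P' = N_P(Q) and F' = N_F(Q). Let R be a subgroup of P', J a subgroup of Aut(R) such that R is fully J-normalized in F', set T = Q·R, and let I be the subgroup of Aut(T) consisting of the automorphisms α with α(Q) = Q and α(R) = R whose restriction to R belongs to J. Then N_P^I(T) = N_{P'}^J(R); moreover, for any subgroups A and B of this common subgroup, an injective homomorphism φ: B → A belongs to N_F^I(T)(A,B) (morphisms defined with respect to (T,I) inside F) if and only if it belongs to N_{F'}^J(R)(A,B) (morphisms defined with respect to (R,J) inside F'). -/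
namespace Puig

variable {G : Type*} [Group G]

/-- The subgroup `I ≤ Aut(Q·R)` of automorphisms stabilizing `Q` and `R` and acting on `R`
via elements of `J`. -/
def stabAut {G : Type*} [Group G] {N : Subgroup G} (Q : Subgroup G) (R : Subgroup ↥N)
    (J : Subgroup (MulAut ↥R)) : Subgroup (MulAut ↥(Q ⊔ liftSub R)) :=
  Subgroup.closure {α |
    (Q.subgroupOf (Q ⊔ liftSub R)).map α.toMonoidHom = Q.subgroupOf (Q ⊔ liftSub R) ∧
    ((liftSub R).subgroupOf (Q ⊔ liftSub R)).map α.toMonoidHom =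
      (liftSub R).subgroupOf (Q ⊔ liftSub R) ∧
    ∃ j ∈ J, ∀ (x : ↥N) (hx : x ∈ R) (hx' : (x : G) ∈ Q ⊔ liftSub R),
      ((α ⟨(x : G), hx'⟩ : ↥(Q ⊔ liftSub R)) : G) = (((j ⟨x, hx⟩ : ↥R) : ↥N) : G)}


section Helpers

variable {G : Type*} [Group G]

lemma mem_liftSub {N : Subgroup G} {A : Subgroup ↥N} {x : G} :
    x ∈ liftSub A ↔ ∃ y : ↥N, y ∈ A ∧ (y : G) = x := by
  simp [liftSub, Subgroup.mem_map]

lemma mem_liftSub_of_mem {N : Subgroup G} {A : Subgroup ↥N} {y : ↥N} (hy : y ∈ A) :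
    (y : G) ∈ liftSub A := mem_liftSub.mpr ⟨y, hy, rfl⟩

lemma liftSub_le {N : Subgroup G} (A : Subgroup ↥N) : liftSub A ≤ N :=
  Subgroup.map_subtype_le A

lemma liftSub_sup {N : Subgroup G} (A B : Subgroup ↥N) :
    liftSub (A ⊔ B) = liftSub A ⊔ liftSub B :=
  Subgroup.map_sup A B N.subtype

lemma mem_NPK {Q : Subgroup G} {K : Subgroup (MulAut ↥Q)} {x : G} :
    x ∈ NPK Q K ↔ ∃ h : x ∈ (Subgroup.normalizer (Q : Set G)), conjAut Q ⟨x, h⟩ ∈ K := by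
  constructor
  · rintro hx
    rcases Subgroup.mem_map.mp hx with ⟨y, hy, rfl⟩
    exact ⟨y.2, by simpa [conjHomN] using Subgroup.mem_comap.mp hy⟩
  · rintro ⟨h, hK⟩
    exact Subgroup.mem_map.mpr ⟨⟨x, h⟩, Subgroup.mem_comap.mpr (by simpa [conjHomN] using hK), rfl⟩

lemma mem_NPK_top {Q : Subgroup G} {x : G} :
    x ∈ NPK Q (⊤ : Subgroup (MulAut ↥Q)) ↔ x ∈ (Subgroup.normalizer (Q : Set G)) := by
  rw [mem_NPK]
  exact ⟨fun ⟨h, _⟩ => h, fun h => ⟨h, Subgroup.mem_top _⟩⟩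

lemma map_inv_of_map_eq {H : Type*} [Group H] {e : MulAut H} {S : Subgroup H}
    (h : S.map e.toMonoidHom = S) : S.map (e⁻¹).toMonoidHom = S := by
  conv_lhs => rw [← h]
  rw [Subgroup.map_map]
  convert Subgroup.map_id S using 2
  ext x
  simp

lemma apply_mem_of_map_eq {H : Type*} [Group H] {e : MulAut H} {S : Subgroup H}
    (h : S.map e.toMonoidHom = S) {x : H} (hx : x ∈ S) : e x ∈ S := by
  rw [← h]; exact Subgroup.mem_map_of_mem _ hx

lemma inv_apply_mem_of_map_eq {H : Type*} [Group H] {e : MulAut H} {S : Subgroup H}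
    (h : S.map e.toMonoidHom = S) {x : H} (hx : x ∈ S) : e⁻¹ x ∈ S :=
  apply_mem_of_map_eq (map_inv_of_map_eq h) hx

end Helpers

lemma liftSub_mono {G : Type*} [Group G] {N : Subgroup G} {A B : Subgroup ↥N} (h : A ≤ B) :
    liftSub A ≤ liftSub B := Subgroup.map_mono h

section Stab

variable {G : Type*} [Group G] {N : Subgroup G} (Q : Subgroup G) (R : Subgroup ↥N)
  (J : Subgroup (MulAut ↥R))

/-- The defining condition of `stabAut` as a predicate. -/
def stabCond (α : MulAut ↥(Q ⊔ liftSub R)) : Prop :=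
  (Q.subgroupOf (Q ⊔ liftSub R)).map α.toMonoidHom = Q.subgroupOf (Q ⊔ liftSub R) ∧
  ((liftSub R).subgroupOf (Q ⊔ liftSub R)).map α.toMonoidHom =
    (liftSub R).subgroupOf (Q ⊔ liftSub R) ∧
  ∃ j ∈ J, ∀ (x : ↥N) (hx : x ∈ R) (hx' : (x : G) ∈ Q ⊔ liftSub R),
    ((α ⟨(x : G), hx'⟩ : ↥(Q ⊔ liftSub R)) : G) = (((j ⟨x, hx⟩ : ↥R) : ↥N) : G)

variable {Q R J}

lemma liftSub_le_sup : liftSub R ≤ Q ⊔ liftSub R := le_sup_right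

lemma coe_mem_sup {x : ↥N} (hx : x ∈ R) : (x : G) ∈ Q ⊔ liftSub R :=
  Subgroup.mem_sup_right (mem_liftSub_of_mem hx)

lemma stabCond_one : stabCond Q R J 1 := by
  refine ⟨?_, ?_, 1, one_mem J, ?_⟩
  · ext x; simp [Subgroup.mem_map]
  · ext x; simp [Subgroup.mem_map]
  · intro x hx hx'; rfl

lemma stabCond_mul {α β : MulAut ↥(Q ⊔ liftSub R)} (hα : stabCond Q R J α)
    (hβ : stabCond Q R J β) : stabCond Q R J (α * β) := by
  obtain ⟨hα1, hα2, j, hj, hj'⟩ := hα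
  obtain ⟨hβ1, hβ2, k, hk, hk'⟩ := hβ
  have hcomp : (α * β).toMonoidHom = α.toMonoidHom.comp β.toMonoidHom := by ext x; rfl
  refine ⟨?_, ?_, j * k, mul_mem hj hk, ?_⟩
  · rw [hcomp, ← Subgroup.map_map, hβ1, hα1]
  · rw [hcomp, ← Subgroup.map_map, hβ2, hα2]
  · intro x hx hx'
    have hkx : ((k ⟨x, hx⟩ : ↥R) : ↥N) ∈ R := (k ⟨x, hx⟩).2
    have hkx' : (((k ⟨x, hx⟩ : ↥R) : ↥N) : G) ∈ Q ⊔ liftSub R := coe_mem_sup hkx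
    have hβeq : β ⟨(x : G), hx'⟩ = ⟨(((k ⟨x, hx⟩ : ↥R) : ↥N) : G), hkx'⟩ :=
      Subtype.ext (hk' x hx hx')
    show ((α (β ⟨(x : G), hx'⟩) : ↥(Q ⊔ liftSub R)) : G) = _
    rw [hβeq]
    simpa using hj' ((k ⟨x, hx⟩ : ↥R) : ↥N) hkx hkx'

lemma stabCond_inv {α : MulAut ↥(Q ⊔ liftSub R)} (hα : stabCond Q R J α) :
    stabCond Q R J α⁻¹ := by
  obtain ⟨hα1, hα2, j, hj, hj'⟩ := hα
  refine ⟨map_inv_of_map_eq hα1, map_inv_of_map_eq hα2, j⁻¹, inv_mem hj, ?_⟩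
  intro x hx hx'
  set y : ↥R := j⁻¹ ⟨x, hx⟩ with hy
  have hyR : (y : ↥N) ∈ R := y.2
  have hy' : ((y : ↥N) : G) ∈ Q ⊔ liftSub R := coe_mem_sup hyR
  have hja := hj' (y : ↥N) hyR hy'
  have hjy : j ⟨(y : ↥N), hyR⟩ = ⟨x, hx⟩ := by
    have hyy : (⟨(y : ↥N), hyR⟩ : ↥R) = y := Subtype.ext rfl
    rw [hyy, hy]
    exact MulAut.apply_inv_self _ j ⟨x, hx⟩
  have hαy : α ⟨((y : ↥N) : G), hy'⟩ = ⟨(x : G), hx'⟩ := by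
    apply Subtype.ext
    rw [hja, hjy]
  have hinv : α⁻¹ ⟨(x : G), hx'⟩ = ⟨((y : ↥N) : G), hy'⟩ := by
    rw [← hαy]
    exact MulAut.inv_apply_self _ α _
  rw [hinv]

lemma mem_stabAut {α : MulAut ↥(Q ⊔ liftSub R)} :
    α ∈ stabAut Q R J ↔ stabCond Q R J α := by
  constructor
  · intro h
    exact Subgroup.closure_induction (fun x hx => hx) stabCond_one
      (fun x y _ _ hx hy => stabCond_mul hx hy) (fun x _ hx => stabCond_inv hx) h
  · intro h
    exact Subgroup.subset_closure h

end Stab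

section Part1

variable {G : Type*} [Group G]

@[simp] lemma conjAut_coe {Q : Subgroup G} (v : ↥(Subgroup.normalizer (Q : Set G))) (x : ↥Q) :
    ((conjAut Q v x : ↥Q) : G) = (v : G) * x * (v : G)⁻¹ := rfl

@[simp] lemma conjAut_inv_coe {Q : Subgroup G} (v : ↥(Subgroup.normalizer (Q : Set G))) (x : ↥Q) :
    (((conjAut Q v)⁻¹ x : ↥Q) : G) = (v : G)⁻¹ * x * (v : G) := rfl

lemma conj_mem_iff_inv {A : Subgroup G} {u : G} (h : ∀ x, x ∈ A ↔ u * x * u⁻¹ ∈ A) :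
    ∀ x, x ∈ A ↔ u⁻¹ * x * u ∈ A := by
  intro x
  have e : u * (u⁻¹ * x * u) * u⁻¹ = x := by group
  simpa [e] using (h (u⁻¹ * x * u)).symm

lemma mem_normalizer_sup {A B : Subgroup G} {u : G} (hA : ∀ x, x ∈ A ↔ u * x * u⁻¹ ∈ A)
    (hB : ∀ x, x ∈ B ↔ u * x * u⁻¹ ∈ B) : u ∈ (Subgroup.normalizer ((A ⊔ B : Subgroup G) : Set G)) := by
  have fwd : ∀ v : G, (∀ x, x ∈ A ↔ v * x * v⁻¹ ∈ A) → (∀ x, x ∈ B ↔ v * x * v⁻¹ ∈ B) →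
      ∀ x ∈ A ⊔ B, v * x * v⁻¹ ∈ A ⊔ B := by
    intro v hA' hB'
    have hle : A ⊔ B ≤ (A ⊔ B).comap (MulAut.conj v).toMonoidHom :=
      sup_le (fun x hx => Subgroup.mem_comap.mpr
          (by simpa [MulAut.conj_apply, mul_assoc] using Subgroup.mem_sup_left ((hA' x).mp hx)))
        (fun x hx => Subgroup.mem_comap.mpr
          (by simpa [MulAut.conj_apply, mul_assoc] using Subgroup.mem_sup_right ((hB' x).mp hx)))
    intro x hx
    have hm := Subgroup.mem_comap.mp (hle hx)
    simpa [MulAut.conj_apply, mul_assoc] using hm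
  rw [Subgroup.mem_normalizer_iff]
  intro x
  constructor
  · exact fun hx => fwd u hA hB x hx
  · intro hx
    have hA' : ∀ y, y ∈ A ↔ u⁻¹ * y * u⁻¹⁻¹ ∈ A := by
      simpa [inv_inv] using conj_mem_iff_inv hA
    have hB' : ∀ y, y ∈ B ↔ u⁻¹ * y * u⁻¹⁻¹ ∈ B := by
      simpa [inv_inv] using conj_mem_iff_inv hB
    have h2 := fwd u⁻¹ hA' hB' _ hx
    have e : u⁻¹ * (u * x * u⁻¹) * u⁻¹⁻¹ = x := by group
    rwa [e] at h2

/-- From a map-equality for `conjAut T v` one gets the pointwise conjugation rule. -/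
lemma conjAut_mem_iff {T S : Subgroup G} (v : ↥(Subgroup.normalizer (T : Set G))) (hST : S ≤ T)
    (h : (S.subgroupOf T).map (conjAut T v).toMonoidHom = S.subgroupOf T) (x : G) :
    x ∈ S ↔ (v : G) * x * (v : G)⁻¹ ∈ S := by
  constructor
  · intro hx
    have hxT : x ∈ T := hST hx
    have hm := apply_mem_of_map_eq h
      (Subgroup.mem_subgroupOf.mpr hx : (⟨x, hxT⟩ : ↥T) ∈ S.subgroupOf T)
    simpa [Subgroup.mem_subgroupOf] using hm
  · intro hx
    have hxT : x ∈ T := (Subgroup.mem_normalizer_iff.mp v.2 x).mpr (hST hx)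
    have hz : (⟨(v : G) * x * (v : G)⁻¹, (Subgroup.mem_normalizer_iff.mp v.2 x).mp hxT⟩ : ↥T)
        ∈ S.subgroupOf T := Subgroup.mem_subgroupOf.mpr hx
    have hzeq : conjAut T v ⟨x, hxT⟩ =
        ⟨(v : G) * x * (v : G)⁻¹, (Subgroup.mem_normalizer_iff.mp v.2 x).mp hxT⟩ :=
      Subtype.ext rfl
    have hm := inv_apply_mem_of_map_eq h hz
    rw [← hzeq, MulAut.inv_apply_self] at hm
    exact Subgroup.mem_subgroupOf.mp hm

variable {N : Subgroup G} {Q : Subgroup G} {R : Subgroup ↥N} {J : Subgroup (MulAut ↥R)}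

lemma NPK_stabAut_eq (hN : ∀ x : G, x ∈ N ↔ x ∈ (Subgroup.normalizer (Q : Set G))) :
    NPK (Q ⊔ liftSub R) (stabAut Q R J) = liftSub (NPK R J) := by
  ext u
  constructor
  · intro hu
    obtain ⟨hnorm, hI⟩ := mem_NPK.mp hu
    obtain ⟨h1, h2, j, hj, hjeq⟩ := mem_stabAut.mp hI
    have hQn := conjAut_mem_iff (⟨u, hnorm⟩ : ↥(Subgroup.normalizer ((Q ⊔ liftSub R : Subgroup G) : Set G))) le_sup_left h1
    have hRn := conjAut_mem_iff (⟨u, hnorm⟩ : ↥(Subgroup.normalizer ((Q ⊔ liftSub R : Subgroup G) : Set G))) le_sup_right h2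
    have hu_N : u ∈ N := (hN u).mpr (Subgroup.mem_normalizer_iff.mpr hQn)
    set uh : ↥N := ⟨u, hu_N⟩ with huh
    have hC : uh ∈ Subgroup.normalizer (R : Set ↥N) := by
      rw [Subgroup.mem_normalizer_iff]
      intro x
      constructor
      · intro hx
        have h3 := (hRn (x : G)).mp (mem_liftSub_of_mem hx)
        obtain ⟨y, hy, hyeq⟩ := mem_liftSub.mp h3
        have : uh * x * uh⁻¹ = y := by
          apply Subtype.ext
          push_cast
          rw [hyeq]
        rw [this]; exact hy
      · intro hx
        have h3 : u * (x : G) * u⁻¹ ∈ liftSub R := by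
          have : ((uh * x * uh⁻¹ : ↥N) : G) = u * (x : G) * u⁻¹ := by push_cast; rfl
          rw [← this]; exact mem_liftSub_of_mem hx
        have h4 := (hRn (x : G)).mpr h3
        obtain ⟨y, hy, hyeq⟩ := mem_liftSub.mp h4
        have : y = x := Subtype.ext hyeq
        rwa [← this]
    have hβ : conjAut R ⟨uh, hC⟩ = j := by
      apply MulEquiv.ext
      intro z
      apply Subtype.ext; apply Subtype.ext
      have lhs : (((conjAut R ⟨uh, hC⟩ z : ↥R) : ↥N) : G) = u * (z : ↥N) * u⁻¹ := by
        push_cast; rfl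
      have rhs := hjeq (z : ↥N) z.2 (coe_mem_sup z.2)
      have lhs2 : ((conjAut (Q ⊔ liftSub R) ⟨u, hnorm⟩ ⟨((z : ↥N) : G), coe_mem_sup z.2⟩ :
          ↥(Q ⊔ liftSub R)) : G) = u * (z : ↥N) * u⁻¹ := rfl
      rw [lhs]
      rw [lhs2] at rhs
      rw [rhs]
    refine mem_liftSub_of_mem (A := NPK R J) (y := uh) ?_
    exact mem_NPK.mpr ⟨hC, by rw [hβ]; exact hj⟩
  · intro hu
    obtain ⟨uh, huhM, rfl⟩ := mem_liftSub.mp hu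
    obtain ⟨huhn, hβJ⟩ := mem_NPK.mp huhM
    have hQn : ∀ x : G, x ∈ Q ↔ (uh : G) * x * (uh : G)⁻¹ ∈ Q :=
      Subgroup.mem_normalizer_iff.mp ((hN _).mp uh.2)
    have hRn : ∀ x : G, x ∈ liftSub R ↔ (uh : G) * x * (uh : G)⁻¹ ∈ liftSub R := by
      intro x
      constructor
      · intro hx
        obtain ⟨xh, hxh, rfl⟩ := mem_liftSub.mp hx
        have h3 := (Subgroup.mem_normalizer_iff.mp huhn xh).mp hxh
        have : ((uh * xh * uh⁻¹ : ↥N) : G) = (uh : G) * (xh : G) * (uh : G)⁻¹ := by push_cast; rfl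
        rw [← this]
        exact mem_liftSub_of_mem h3
      · intro hx
        obtain ⟨yh, hyh, hyeq⟩ := mem_liftSub.mp hx
        have hxN : x ∈ N := by
          have hx2 : x = (uh : G)⁻¹ * (yh : G) * (uh : G) := by rw [hyeq]; group
          rw [hx2]
          exact mul_mem (mul_mem (inv_mem uh.2) yh.2) uh.2
        have heq : uh * ⟨x, hxN⟩ * uh⁻¹ = yh := by
          apply Subtype.ext; push_cast
          exact hyeq.symm
        have h4 : (⟨x, hxN⟩ : ↥N) ∈ R :=
          (Subgroup.mem_normalizer_iff.mp huhn _).mpr (by rw [heq]; exact hyh)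
        exact mem_liftSub_of_mem h4
    have hTn : (uh : G) ∈ (Subgroup.normalizer ((Q ⊔ liftSub R : Subgroup G) : Set G)) := mem_normalizer_sup hQn hRn
    set α := conjAut (Q ⊔ liftSub R) ⟨(uh : G), hTn⟩ with hα
    have cond : stabCond Q R J α := by
      refine ⟨?_, ?_, conjAut R ⟨uh, huhn⟩, hβJ, ?_⟩
      · ext z
        rw [Subgroup.mem_map]
        constructor
        · rintro ⟨w, hw, rfl⟩
          exact Subgroup.mem_subgroupOf.mpr
            ((hQn (w : G)).mp (Subgroup.mem_subgroupOf.mp hw))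
        · intro hz
          refine ⟨α⁻¹ z, Subgroup.mem_subgroupOf.mpr ?_, MulAut.apply_inv_self _ _ _⟩
          have : ((α⁻¹ z : ↥(Q ⊔ liftSub R)) : G) = (uh : G)⁻¹ * (z : G) * (uh : G) := rfl
          rw [this]
          exact (conj_mem_iff_inv hQn (z : G)).mp (Subgroup.mem_subgroupOf.mp hz)
      · ext z
        rw [Subgroup.mem_map]
        constructor
        · rintro ⟨w, hw, rfl⟩
          exact Subgroup.mem_subgroupOf.mpr
            ((hRn (w : G)).mp (Subgroup.mem_subgroupOf.mp hw))
        · intro hz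
          refine ⟨α⁻¹ z, Subgroup.mem_subgroupOf.mpr ?_, MulAut.apply_inv_self _ _ _⟩
          have : ((α⁻¹ z : ↥(Q ⊔ liftSub R)) : G) = (uh : G)⁻¹ * (z : G) * (uh : G) := rfl
          rw [this]
          exact (conj_mem_iff_inv hRn (z : G)).mp (Subgroup.mem_subgroupOf.mp hz)
      · intro x hx hx'
        have lhs : ((α ⟨(x : ↥N), hx'⟩ : ↥(Q ⊔ liftSub R)) : G) =
            (uh : G) * (x : G) * (uh : G)⁻¹ := rfl
        have rhs : (((conjAut R ⟨uh, huhn⟩ ⟨x, hx⟩ : ↥R) : ↥N) : G) =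
            (uh : G) * (x : G) * (uh : G)⁻¹ := by push_cast; rfl
        rw [lhs, rhs]
    exact mem_NPK.mpr ⟨hTn, mem_stabAut.mpr cond⟩

end Part1

section Aux2

variable {G : Type*} [Group G]

/-- Transport of a morphism along equalities of subgroups. -/
def transportHom {X Y X' Y' : Subgroup G} (ψ : ↥X →* ↥Y) (hX : X' = X) (hY : Y = Y') :
    ↥X' →* ↥Y' :=
  ((MulEquiv.subgroupCongr hY).toMonoidHom.comp ψ).comp
    (MulEquiv.subgroupCongr hX).toMonoidHom

lemma transportHom_coe {X Y X' Y' : Subgroup G} (ψ : ↥X →* ↥Y) (hX : X' = X) (hY : Y = Y')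
    (x : ↥X') (hx : (x : G) ∈ X) :
    ((transportHom ψ hX hY x : ↥Y') : G) = ((ψ ⟨(x : G), hx⟩ : ↥Y) : G) := by
  have h1 : (MulEquiv.subgroupCongr hX) x = ⟨(x : G), hx⟩ :=
    Subtype.ext (MulEquiv.subgroupCongr_apply hX x)
  simp only [transportHom, MonoidHom.comp_apply, MulEquiv.coe_toMonoidHom, h1]
  exact MulEquiv.subgroupCongr_apply hY _

lemma transportHom_refl {X Y : Subgroup G} (ψ : ↥X →* ↥Y) :
    transportHom ψ rfl rfl = ψ :=
  MonoidHom.ext fun _ => Subtype.ext rfl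

lemma transportHom_mem {F : PCat G} {X Y X' Y' : Subgroup G} (hX : X' = X) (hY : Y = Y')
    {ψ : ↥X →* ↥Y} (hψ : ψ ∈ F.Hom Y X) : transportHom ψ hX hY ∈ F.Hom Y' X' := by
  subst hX; subst hY
  rwa [transportHom_refl]

/-- Corestriction of a morphism between subgroups of `G` to subgroups of a subgroup `N`. -/
def corestrict {N : Subgroup G} {X Y : Subgroup G} {X' Y' : Subgroup ↥N}
    (ψ : ↥X →* ↥Y) (hX : ∀ x : ↥X', ((x : ↥N) : G) ∈ X)
    (h : ∀ x : ↥X', ((ψ ⟨(x : ↥N), hX x⟩ : ↥Y) : G) ∈ liftSub Y') : ↥X' →* ↥Y' where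
  toFun x := ⟨⟨((ψ ⟨(x : ↥N), hX x⟩ : ↥Y) : G), liftSub_le Y' (h x)⟩, by
    obtain ⟨y, hy, hyeq⟩ := mem_liftSub.mp (h x)
    have : (⟨((ψ ⟨(x : ↥N), hX x⟩ : ↥Y) : G), liftSub_le Y' (h x)⟩ : ↥N) = y :=
      Subtype.ext hyeq.symm
    rw [this]; exact hy⟩
  map_one' := by
    apply Subtype.ext; apply Subtype.ext
    show ((ψ ⟨((1 : ↥X') : ↥N), hX 1⟩ : ↥Y) : G) = 1
    have h1 : (⟨((1 : ↥X') : ↥N), hX 1⟩ : ↥X) = 1 := by apply Subtype.ext; simp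
    rw [h1, map_one]; rfl
  map_mul' x y := by
    apply Subtype.ext; apply Subtype.ext
    show ((ψ ⟨((x * y : ↥X') : ↥N), hX (x * y)⟩ : ↥Y) : G) = _
    have h1 : (⟨((x * y : ↥X') : ↥N), hX (x * y)⟩ : ↥X) =
        ⟨(x : ↥N), hX x⟩ * ⟨(y : ↥N), hX y⟩ := by apply Subtype.ext; simp
    rw [h1, map_mul]; rfl

lemma corestrict_coe {N : Subgroup G} {X Y : Subgroup G} {X' Y' : Subgroup ↥N}
    (ψ : ↥X →* ↥Y) (hX : ∀ x : ↥X', ((x : ↥N) : G) ∈ X)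
    (h : ∀ x : ↥X', ((ψ ⟨(x : ↥N), hX x⟩ : ↥Y) : G) ∈ liftSub Y') (x : ↥X') :
    (((corestrict ψ hX h x : ↥Y') : ↥N) : G) = ((ψ ⟨(x : ↥N), hX x⟩ : ↥Y) : G) := rfl

/-- Restriction of an injective morphism to an invariant finite subgroup, as an
automorphism. -/
noncomputable def restrictAut {S X Y : Subgroup G} [Finite ↥S] (f : ↥X →* ↥Y)
    (hSX : S ≤ X) (h : ∀ x : ↥S, ((f ⟨(x : G), hSX x.2⟩ : ↥Y) : G) ∈ S)
    (hinj : Function.Injective f) : MulAut ↥S :=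
  MulEquiv.ofBijective
    ({ toFun := fun x => ⟨((f ⟨(x : G), hSX x.2⟩ : ↥Y) : G), h x⟩
       map_one' := by
         apply Subtype.ext
         show ((f ⟨((1 : ↥S) : G), _⟩ : ↥Y) : G) = 1
         have h1 : (⟨((1 : ↥S) : G), hSX (1 : ↥S).2⟩ : ↥X) = 1 := by apply Subtype.ext; simp
         rw [h1, map_one]; rfl
       map_mul' := fun x y => by
         apply Subtype.ext
         show ((f ⟨((x * y : ↥S) : G), _⟩ : ↥Y) : G) = _
         have h1 : (⟨((x * y : ↥S) : G), hSX (x * y).2⟩ : ↥X) =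
             ⟨(x : G), hSX x.2⟩ * ⟨(y : G), hSX y.2⟩ := by apply Subtype.ext; simp
         rw [h1, map_mul]; rfl } : ↥S →* ↥S)
    (by
      rw [← Finite.injective_iff_bijective]
      intro a b hab
      have h2 : f ⟨(a : G), hSX a.2⟩ = f ⟨(b : G), hSX b.2⟩ := by
        apply Subtype.ext
        exact congrArg (fun z : ↥S => (z : G)) hab
      have h3 := hinj h2
      have h4 : ((a : G)) = (b : G) := congrArg (fun z : ↥X => (z : G)) h3
      exact Subtype.ext h4)

lemma restrictAut_coe {S X Y : Subgroup G} [Finite ↥S] (f : ↥X →* ↥Y)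
    (hSX : S ≤ X) (h : ∀ x : ↥S, ((f ⟨(x : G), hSX x.2⟩ : ↥Y) : G) ∈ S)
    (hinj : Function.Injective f) (x : ↥S) :
    ((restrictAut f hSX h hinj x : ↥S) : G) = ((f ⟨(x : G), hSX x.2⟩ : ↥Y) : G) := rfl

end Aux2

/-- **3.8.1**: with `P' = N_P(Q)`, `F' = N_F(Q)`, `T = Q·R` and `I` as above, one has
`N_P^I(T) = N_{P'}^J(R)` and `N_F^I(T) = N_{F'}^J(R)`. -/
theorem normalizer_category_eq
    (p : ℕ) [Fact p.Prime] {P : Type*} [Group P] [Finite P] (hP : IsPGroup p P)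
    (F : PCat P) (hF : F.IsDivisible)
    (Q : Subgroup P) (hQ : FullyKNormalized F Q ⊤)
    (R : Subgroup ↥(NPK Q (⊤ : Subgroup (MulAut ↥Q)))) (J : Subgroup (MulAut ↥R))
    (hRJ : FullyKNormalized (NFK F Q ⊤) R J) :
    NPK (Q ⊔ liftSub R) (stabAut Q R J) = liftSub (NPK R J) ∧
    ∀ (A B : Subgroup ↥(NPK (Q ⊔ liftSub R) (stabAut Q R J)))
      (A' B' : Subgroup ↥(NPK R J)),
      liftSub A = liftSub (liftSub A') → liftSub B = liftSub (liftSub B') →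
      ∀ (φ : ↥B →* ↥A) (φ' : ↥B' →* ↥A'),
        (∀ (x : ↥B) (y : ↥B'),
          ((x : ↥(NPK (Q ⊔ liftSub R) (stabAut Q R J))) : P) =
            (((y : ↥(NPK R J)) : ↥(NPK Q (⊤ : Subgroup (MulAut ↥Q)))) : P) →
          ((φ x : ↥(NPK (Q ⊔ liftSub R) (stabAut Q R J))) : P) =
            (((φ' y : ↥(NPK R J)) : ↥(NPK Q (⊤ : Subgroup (MulAut ↥Q)))) : P)) →
        (φ ∈ (NFK F (Q ⊔ liftSub R) (stabAut Q R J)).Hom A B ↔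
          φ' ∈ (NFK (NFK F Q ⊤) R J).Hom A' B') := by
  have hN : ∀ x : P, x ∈ NPK Q (⊤ : Subgroup (MulAut ↥Q)) ↔ x ∈ Subgroup.normalizer (Q : Set P) :=
    fun _ => mem_NPK_top
  refine ⟨NPK_stabAut_eq hN, ?_⟩
  intro A B A' B' hA hB φ φ' hcompat
  -- subgroup identifications
  have eA : Q ⊔ liftSub (R ⊔ liftSub A') = (Q ⊔ liftSub R) ⊔ liftSub A := by
    rw [liftSub_sup, ← sup_assoc, hA]
  have eB : Q ⊔ liftSub (R ⊔ liftSub B') = (Q ⊔ liftSub R) ⊔ liftSub B := by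
    rw [liftSub_sup, ← sup_assoc, hB]
  constructor
  · -- Forward direction
    rintro ⟨ψ, hψ, χ, hχ, hc1, hc2⟩
    obtain ⟨h1, h2, j, hj, hjeq⟩ := mem_stabAut.mp hχ
    -- domain inclusion for the corestriction
    have hXmem : ∀ x : ↥(R ⊔ liftSub B'), ((x : ↥(NPK Q (⊤ : Subgroup (MulAut ↥Q)))) : P) ∈ (Q ⊔ liftSub R) ⊔ liftSub B := by
      intro x
      have hx1 : ((x : ↥(NPK Q (⊤ : Subgroup (MulAut ↥Q)))) : P) ∈ liftSub (R ⊔ liftSub B') := mem_liftSub_of_mem x.2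
      rw [liftSub_sup, ← hB] at hx1
      exact (sup_le_sup_right (le_sup_right : liftSub R ≤ (Q ⊔ liftSub R)) (liftSub B)) hx1
    -- the corestriction condition
    have hψmaps : ∀ x : ↥(R ⊔ liftSub B'),
        ((ψ ⟨((x : ↥(NPK Q (⊤ : Subgroup (MulAut ↥Q)))) : P), hXmem x⟩ : ↥((Q ⊔ liftSub R) ⊔ liftSub A)) : P) ∈ liftSub (R ⊔ liftSub A') := by
      have hK : liftSub (R ⊔ liftSub B') ≤
          (((liftSub (R ⊔ liftSub A')).subgroupOf ((Q ⊔ liftSub R) ⊔ liftSub A)).comap ψ).map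
            ((Q ⊔ liftSub R) ⊔ liftSub B).subtype := by
        rw [liftSub_sup, ← hB]
        apply sup_le
        · intro z hz
          have hzT : z ∈ (Q ⊔ liftSub R) := Subgroup.mem_sup_right hz
          have hzTB : z ∈ (Q ⊔ liftSub R) ⊔ liftSub B := Subgroup.mem_sup_left hzT
          refine Subgroup.mem_map.mpr ⟨⟨z, hzTB⟩,
            Subgroup.mem_comap.mpr (Subgroup.mem_subgroupOf.mpr ?_), rfl⟩
          rw [hc1 z hzT hzTB]
          have hm := apply_mem_of_map_eq h2
            (Subgroup.mem_subgroupOf.mpr hz : (⟨z, hzT⟩ : ↥(Q ⊔ liftSub R)) ∈ (liftSub R).subgroupOf (Q ⊔ liftSub R))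
          exact liftSub_mono le_sup_left (Subgroup.mem_subgroupOf.mp hm)
        · intro z hz
          obtain ⟨b, hbB, rfl⟩ := mem_liftSub.mp hz
          have hzTB : (b : P) ∈ (Q ⊔ liftSub R) ⊔ liftSub B := Subgroup.mem_sup_right (mem_liftSub_of_mem hbB)
          refine Subgroup.mem_map.mpr ⟨⟨(b : P), hzTB⟩,
            Subgroup.mem_comap.mpr (Subgroup.mem_subgroupOf.mpr ?_), rfl⟩
          rw [hc2 ⟨b, hbB⟩ hzTB]
          have h4 : ((φ ⟨b, hbB⟩ : ↥(NPK (Q ⊔ liftSub R) (stabAut Q R J))) : P) ∈ liftSub A :=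
            mem_liftSub_of_mem (φ ⟨b, hbB⟩).2
          rw [hA] at h4
          exact liftSub_mono le_sup_right h4
      intro x
      have hx := hK (mem_liftSub_of_mem x.2)
      obtain ⟨w, hw, hweq⟩ := Subgroup.mem_map.mp hx
      have hweq' : w = ⟨((x : ↥(NPK Q (⊤ : Subgroup (MulAut ↥Q)))) : P), hXmem x⟩ := Subtype.ext hweq
      have hw2 := Subgroup.mem_subgroupOf.mp (Subgroup.mem_comap.mp hw)
      rwa [hweq'] at hw2
    set ψ' := corestrict ψ hXmem hψmaps with hψ'def
    -- the restricted automorphism of Q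
    have hQmaps : ∀ x : ↥Q,
        ((χ.toMonoidHom ⟨(x : P), (le_sup_left : Q ≤ (Q ⊔ liftSub R)) x.2⟩ : ↥(Q ⊔ liftSub R)) : P) ∈ Q := by
      intro x
      exact Subgroup.mem_subgroupOf.mp
        (apply_mem_of_map_eq h1 (Subgroup.mem_subgroupOf.mpr x.2))
    have hχinj : Function.Injective χ.toMonoidHom := fun a b h => χ.injective h
    refine ⟨ψ', ?_, j, hj, ?_, ?_⟩
    · -- ψ' ∈ F'.Hom (R ⊔ liftSub A') (R ⊔ liftSub B')
      refine ⟨transportHom ψ eB eA.symm, transportHom_mem eB eA.symm hψ,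
        restrictAut χ.toMonoidHom le_sup_left hQmaps hχinj, Subgroup.mem_top _, ?_, ?_⟩
      · intro x hxQ hx
        have hx' : x ∈ (Q ⊔ liftSub R) ⊔ liftSub B := eB ▸ hx
        rw [transportHom_coe ψ eB eA.symm ⟨x, hx⟩ hx']
        rw [hc1 x (Subgroup.mem_sup_left hxQ) hx']
        rw [restrictAut_coe χ.toMonoidHom le_sup_left hQmaps hχinj ⟨x, hxQ⟩]
        rfl
      · intro y hy
        have hy' : ((y : ↥(NPK Q (⊤ : Subgroup (MulAut ↥Q)))) : P) ∈ (Q ⊔ liftSub R) ⊔ liftSub B := eB ▸ hy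
        rw [transportHom_coe ψ eB eA.symm ⟨((y : ↥(NPK Q (⊤ : Subgroup (MulAut ↥Q)))) : P), hy⟩ hy']
        rw [corestrict_coe ψ hXmem hψmaps y]
    · -- agreement with j on R
      intro x hxR hx
      apply Subtype.ext
      have e1 := corestrict_coe ψ hXmem hψmaps ⟨x, hx⟩
      have hxT : (x : P) ∈ (Q ⊔ liftSub R) := Subgroup.mem_sup_right (mem_liftSub_of_mem hxR)
      have e2 := hc1 (x : P) hxT (hXmem ⟨x, hx⟩)
      have e3 := hjeq x hxR hxT
      show (((ψ' ⟨x, hx⟩ : ↥(R ⊔ liftSub A')) : ↥(NPK Q (⊤ : Subgroup (MulAut ↥Q)))) : P) = _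
      rw [e1, e2, e3]
    · -- agreement with φ' on B'
      intro y hy
      apply Subtype.ext
      have e1 := corestrict_coe ψ hXmem hψmaps ⟨(y : ↥(NPK R J)), hy⟩
      -- find the corresponding element of B
      have hyP : (((y : ↥(NPK R J)) : ↥(NPK Q (⊤ : Subgroup (MulAut ↥Q)))) : P) ∈ liftSub B := by
        rw [hB]
        exact mem_liftSub_of_mem (mem_liftSub_of_mem y.2)
      obtain ⟨b, hbB, hbeq⟩ := mem_liftSub.mp hyP
      have hbTB : (b : P) ∈ (Q ⊔ liftSub R) ⊔ liftSub B := Subgroup.mem_sup_right (mem_liftSub_of_mem hbB)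
      have e2 := hc2 ⟨b, hbB⟩ hbTB
      have eargs : (⟨(((y : ↥(NPK R J)) : ↥(NPK Q (⊤ : Subgroup (MulAut ↥Q)))) : P), hXmem ⟨(y : ↥(NPK R J)), hy⟩⟩ :
          ↥((Q ⊔ liftSub R) ⊔ liftSub B)) = ⟨(b : P), hbTB⟩ := Subtype.ext hbeq.symm
      have e4 := hcompat ⟨b, hbB⟩ y hbeq
      show (((ψ' ⟨(y : ↥(NPK R J)), hy⟩ : ↥(R ⊔ liftSub A')) : ↥(NPK Q (⊤ : Subgroup (MulAut ↥Q)))) : P) = _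
      rw [e1, eargs, e2, e4]
  · -- Backward direction
    rintro ⟨ψ', hψ'F', χ', hχ'J, hc1', hc2'⟩
    obtain ⟨ψ'', hψ'', χ'', -, hd1, hd2⟩ := hψ'F'
    have hinj'' : Function.Injective ψ'' := hF.inj hψ''
    have hTsub : (Q ⊔ liftSub R) ≤ Q ⊔ liftSub (R ⊔ liftSub B') := by rw [eB]; exact le_sup_left
    -- ψ'' maps (Q ⊔ liftSub R) into (Q ⊔ liftSub R)
    have hTmaps : ∀ x : ↥(Q ⊔ liftSub R),
        ((ψ'' ⟨(x : P), hTsub x.2⟩ : ↥(Q ⊔ liftSub (R ⊔ liftSub A'))) : P) ∈ (Q ⊔ liftSub R) := by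
      have hK : (Q ⊔ liftSub R) ≤ (((Q ⊔ liftSub R).subgroupOf (Q ⊔ liftSub (R ⊔ liftSub A'))).comap ψ'').map
          (Q ⊔ liftSub (R ⊔ liftSub B')).subtype := by
        apply sup_le
        · intro z hz
          have hz' : z ∈ Q ⊔ liftSub (R ⊔ liftSub B') := Subgroup.mem_sup_left hz
          refine Subgroup.mem_map.mpr ⟨⟨z, hz'⟩,
            Subgroup.mem_comap.mpr (Subgroup.mem_subgroupOf.mpr ?_), rfl⟩
          rw [hd1 z hz hz']
          exact Subgroup.mem_sup_left (χ'' ⟨z, hz⟩).2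
        · intro z hz
          obtain ⟨zh, hzh, rfl⟩ := mem_liftSub.mp hz
          have hzB' : zh ∈ R ⊔ liftSub B' := Subgroup.mem_sup_left hzh
          have hz' : (zh : P) ∈ Q ⊔ liftSub (R ⊔ liftSub B') :=
            Subgroup.mem_sup_right (mem_liftSub_of_mem hzB')
          refine Subgroup.mem_map.mpr ⟨⟨(zh : P), hz'⟩,
            Subgroup.mem_comap.mpr (Subgroup.mem_subgroupOf.mpr ?_), rfl⟩
          have ed2 := hd2 ⟨zh, hzB'⟩ hz'
          rw [ed2]
          have ec1 := hc1' zh hzh hzB'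
          rw [ec1]
          exact Subgroup.mem_sup_right (mem_liftSub_of_mem (χ' ⟨zh, hzh⟩).2)
      intro x
      have hx := hK x.2
      obtain ⟨w, hw, hweq⟩ := Subgroup.mem_map.mp hx
      have hweq' : w = ⟨(x : P), hTsub x.2⟩ := Subtype.ext hweq
      have hw2 := Subgroup.mem_subgroupOf.mp (Subgroup.mem_comap.mp hw)
      rwa [hweq'] at hw2
    set χ := restrictAut ψ'' hTsub hTmaps hinj'' with hχdef
    have hχcoe : ∀ x : ↥(Q ⊔ liftSub R), ((χ x : ↥(Q ⊔ liftSub R)) : P) =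
        ((ψ'' ⟨(x : P), hTsub x.2⟩ : ↥(Q ⊔ liftSub (R ⊔ liftSub A'))) : P) :=
      fun x => restrictAut_coe ψ'' hTsub hTmaps hinj'' x
    -- χ ∈ I
    have hχI : χ ∈ stabAut Q R J := by
      apply mem_stabAut.mpr
      refine ⟨?_, ?_, χ', hχ'J, ?_⟩
      · ext z
        rw [Subgroup.mem_map]
        constructor
        · rintro ⟨w, hw, rfl⟩
          apply Subgroup.mem_subgroupOf.mpr
          have hwQ := Subgroup.mem_subgroupOf.mp hw
          have := hd1 (w : P) hwQ (hTsub w.2)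
          rw [show ((χ.toMonoidHom w : ↥(Q ⊔ liftSub R)) : P) =
            ((ψ'' ⟨(w : P), hTsub w.2⟩ : ↥(Q ⊔ liftSub (R ⊔ liftSub A'))) : P) from hχcoe w,
            this]
          exact (χ'' ⟨(w : P), hwQ⟩).2
        · intro hz
          have hzQ := Subgroup.mem_subgroupOf.mp hz
          set q : ↥Q := χ''⁻¹ ⟨(z : P), hzQ⟩ with hq
          refine ⟨⟨(q : P), Subgroup.mem_sup_left q.2⟩, Subgroup.mem_subgroupOf.mpr q.2, ?_⟩
          apply Subtype.ext
          rw [show ((χ.toMonoidHom ⟨(q : P), Subgroup.mem_sup_left q.2⟩ : ↥(Q ⊔ liftSub R)) : P) = _ from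
            hχcoe ⟨(q : P), Subgroup.mem_sup_left q.2⟩]
          rw [hd1 (q : P) q.2 (hTsub (Subgroup.mem_sup_left q.2))]
          have : χ'' q = ⟨(z : P), hzQ⟩ := by rw [hq]; exact MulAut.apply_inv_self _ _ _
          rw [this]
      · ext z
        rw [Subgroup.mem_map]
        constructor
        · rintro ⟨w, hw, rfl⟩
          apply Subgroup.mem_subgroupOf.mpr
          have hwR := Subgroup.mem_subgroupOf.mp hw
          obtain ⟨wh, hwh, hwheq⟩ := mem_liftSub.mp hwR
          have hwB' : wh ∈ R ⊔ liftSub B' := Subgroup.mem_sup_left hwh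
          have hw' : (wh : P) ∈ Q ⊔ liftSub (R ⊔ liftSub B') :=
            Subgroup.mem_sup_right (mem_liftSub_of_mem hwB')
          have eargs : (⟨(w : P), hTsub w.2⟩ : ↥(Q ⊔ liftSub (R ⊔ liftSub B'))) =
              ⟨(wh : P), hw'⟩ := Subtype.ext hwheq.symm
          rw [show ((χ.toMonoidHom w : ↥(Q ⊔ liftSub R)) : P) = _ from hχcoe w, eargs,
            hd2 ⟨wh, hwB'⟩ hw', hc1' wh hwh hwB']
          exact mem_liftSub_of_mem (χ' ⟨wh, hwh⟩).2
        · intro hz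
          have hzR := Subgroup.mem_subgroupOf.mp hz
          obtain ⟨zh, hzh, hzheq⟩ := mem_liftSub.mp hzR
          set r : ↥R := χ'⁻¹ ⟨zh, hzh⟩ with hr
          have hrT : ((r : ↥(NPK Q (⊤ : Subgroup (MulAut ↥Q)))) : P) ∈ (Q ⊔ liftSub R) := Subgroup.mem_sup_right (mem_liftSub_of_mem r.2)
          refine ⟨⟨((r : ↥(NPK Q (⊤ : Subgroup (MulAut ↥Q)))) : P), hrT⟩,
            Subgroup.mem_subgroupOf.mpr (mem_liftSub_of_mem r.2), ?_⟩
          apply Subtype.ext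
          have hrB' : (r : ↥(NPK Q (⊤ : Subgroup (MulAut ↥Q)))) ∈ R ⊔ liftSub B' := Subgroup.mem_sup_left r.2
          have hr' : ((r : ↥(NPK Q (⊤ : Subgroup (MulAut ↥Q)))) : P) ∈ Q ⊔ liftSub (R ⊔ liftSub B') :=
            Subgroup.mem_sup_right (mem_liftSub_of_mem hrB')
          rw [show ((χ.toMonoidHom ⟨((r : ↥(NPK Q (⊤ : Subgroup (MulAut ↥Q)))) : P), hrT⟩ : ↥(Q ⊔ liftSub R)) : P) = _ from
            hχcoe ⟨((r : ↥(NPK Q (⊤ : Subgroup (MulAut ↥Q)))) : P), hrT⟩]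
          have eargs : (⟨((r : ↥(NPK Q (⊤ : Subgroup (MulAut ↥Q)))) : P), hTsub hrT⟩ : ↥(Q ⊔ liftSub (R ⊔ liftSub B'))) =
              ⟨((r : ↥(NPK Q (⊤ : Subgroup (MulAut ↥Q)))) : P), hr'⟩ := Subtype.ext rfl
          rw [eargs, hd2 ⟨(r : ↥(NPK Q (⊤ : Subgroup (MulAut ↥Q)))), hrB'⟩ hr']
          have ec1 := hc1' (r : ↥(NPK Q (⊤ : Subgroup (MulAut ↥Q)))) r.2 hrB'
          rw [ec1]
          have : χ' ⟨(r : ↥(NPK Q (⊤ : Subgroup (MulAut ↥Q)))), r.2⟩ = ⟨zh, hzh⟩ := by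
            have : (⟨(r : ↥(NPK Q (⊤ : Subgroup (MulAut ↥Q)))), r.2⟩ : ↥R) = r := Subtype.ext rfl
            rw [this, hr]
            exact MulAut.apply_inv_self _ _ _
          rw [this, hzheq]
      · intro x hx hx'
        have hxB' : x ∈ R ⊔ liftSub B' := Subgroup.mem_sup_left hx
        have hx2 : (x : P) ∈ Q ⊔ liftSub (R ⊔ liftSub B') :=
          Subgroup.mem_sup_right (mem_liftSub_of_mem hxB')
        rw [show ((χ ⟨(x : P), hx'⟩ : ↥(Q ⊔ liftSub R)) : P) = _ from hχcoe ⟨(x : P), hx'⟩]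
        have eargs : (⟨(x : P), hTsub hx'⟩ : ↥(Q ⊔ liftSub (R ⊔ liftSub B'))) =
            ⟨(x : P), hx2⟩ := Subtype.ext rfl
        rw [eargs, hd2 ⟨x, hxB'⟩ hx2, hc1' x hx hxB']
    refine ⟨transportHom ψ'' eB.symm eA, transportHom_mem eB.symm eA hψ'', χ, hχI, ?_, ?_⟩
    · intro x hxT hx
      have hx' : x ∈ Q ⊔ liftSub (R ⊔ liftSub B') := by rw [eB]; exact hx
      rw [transportHom_coe ψ'' eB.symm eA ⟨x, hx⟩ hx']
      rw [show ((χ ⟨x, hxT⟩ : ↥(Q ⊔ liftSub R)) : P) = _ from hχcoe ⟨x, hxT⟩]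
    · intro y hy
      have hy' : ((y : ↥(NPK (Q ⊔ liftSub R) (stabAut Q R J))) : P) ∈ Q ⊔ liftSub (R ⊔ liftSub B') := by
        rw [eB]; exact hy
      rw [transportHom_coe ψ'' eB.symm eA ⟨_, hy⟩ hy']
      -- find corresponding element of B'
      have hyP : ((y : ↥(NPK (Q ⊔ liftSub R) (stabAut Q R J))) : P) ∈ liftSub (liftSub B') := by
        rw [← hB]
        exact mem_liftSub_of_mem y.2
      obtain ⟨w, hw, hweq⟩ := mem_liftSub.mp hyP
      obtain ⟨v, hv, hveq⟩ := mem_liftSub.mp hw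
      have hvB' : (v : ↥(NPK Q (⊤ : Subgroup (MulAut ↥Q)))) ∈ R ⊔ liftSub B' := Subgroup.mem_sup_right (mem_liftSub_of_mem hv)
      have hv2 : ((v : ↥(NPK Q (⊤ : Subgroup (MulAut ↥Q)))) : P) ∈ Q ⊔ liftSub (R ⊔ liftSub B') :=
        Subgroup.mem_sup_right (mem_liftSub_of_mem hvB')
      have eargs : (⟨((y : ↥(NPK (Q ⊔ liftSub R) (stabAut Q R J))) : P), hy'⟩ :
          ↥(Q ⊔ liftSub (R ⊔ liftSub B'))) = ⟨((v : ↥(NPK Q (⊤ : Subgroup (MulAut ↥Q)))) : P), hv2⟩ := by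
        apply Subtype.ext
        show _ = ((v : ↥(NPK Q (⊤ : Subgroup (MulAut ↥Q)))) : P)
        rw [hveq, hweq]
      rw [eargs, hd2 ⟨(v : ↥(NPK Q (⊤ : Subgroup (MulAut ↥Q)))), hvB'⟩ hv2]
      have ec2 := hc2' ⟨v, hv⟩ hvB'
      have eargs2 : (⟨((⟨v, hv⟩ : ↥B') : ↥(NPK R J)), hvB'⟩ : ↥(R ⊔ liftSub B')) =
          ⟨(v : ↥(NPK Q (⊤ : Subgroup (MulAut ↥Q)))), hvB'⟩ := rfl
      rw [eargs2] at ec2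
      rw [ec2]
      have e4 := hcompat y ⟨v, hv⟩ (by rw [← hweq, hveq])
      rw [← e4]

end Puig
end

section
/- Let F be a divisible P-category and Q a normal subgroup of P such that, for every subgroup R of P, every morphism φ ∈ F(P,R) extends to a morphism ψ ∈ F(P, Q·R) with ψ(Q) = Q and ψ(x) = φ(x) for all x ∈ R (i.e. N_F(Q) = F). Then every F-intersected subgroup R of P contains Q. -/
namespace Puig

variable {G : Type*} [Group G]

open scoped Pointwise in
private lemma mem_sup_of_normal {Q R : Subgroup G} [hQn : Q.Normal] {x : G}
    (hx : x ∈ Q ⊔ R) : ∃ q ∈ Q, ∃ r ∈ R, q * r = x := by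
  rw [← SetLike.mem_coe, Subgroup.normal_mul] at hx
  exact Set.mem_mul.mp hx

/-- **3.11**: if `Q` is a normal subgroup of `P` with `N_F(Q) = F` (every morphism of `F`
extends to one stabilizing `Q`), then every `F`-intersected subgroup of `P` contains `Q`. -/
theorem intersected_contains_normal
    (p : ℕ) [Fact p.Prime] {P : Type*} [Group P] [Finite P] (hP : IsPGroup p P)
    (F : PCat P) (hF : F.IsDivisible)
    (Q : Subgroup P) (hQn : Q.Normal)
    (hN : ∀ (R : Subgroup P) (φ : ↥R →* ↥(⊤ : Subgroup P)), φ ∈ F.Hom ⊤ R →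
      ∃ ψ ∈ F.Hom ⊤ (Q ⊔ R),
        ((Q.subgroupOf (Q ⊔ R)).map ψ).map (⊤ : Subgroup P).subtype = Q ∧
        ∀ (x : ↥R) (hx : (x : P) ∈ Q ⊔ R), ψ ⟨(x : P), hx⟩ = φ x) :
    ∀ R : Subgroup P, Intersected F R → Q ≤ R := by
  intro R hR
  obtain ⟨hSC, hInt⟩ := hR
  by_contra hQR
  -- the inclusion morphism `R → P` belongs to `F`
  set ι : ↥R →* ↥(⊤ : Subgroup P) := conjMap (1 : P) (fun x _ => Subgroup.mem_top _) with hι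
  have hιmem : ι ∈ F.Hom ⊤ R := hF.conj_mem 1 _
  have himgι : img ι = R := by
    ext y
    simp only [img, Subgroup.mem_map, MonoidHom.mem_range, Subgroup.coe_subtype]
    constructor
    · rintro ⟨z, ⟨x, rfl⟩, rfl⟩
      simpa [ι, conjMap] using x.2
    · intro hy
      exact ⟨ι ⟨y, hy⟩, ⟨⟨y, hy⟩, rfl⟩, by simp [ι, conjMap]⟩
  -- find `u ∈ Q ∩ N_P(R)` with `u ∉ R`
  have hRS : ¬ (Q ⊔ R ≤ R) := fun h => hQR (le_sup_left.trans h)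
  set S := Q ⊔ R with hS
  have hpS : IsPGroup p ↥S := hP.to_subgroup S
  have hnc : NormalizerCondition ↥S := by
    haveI := hpS.isNilpotent
    exact normalizerCondition_of_isNilpotent
  have hlt : R.subgroupOf S < ⊤ :=
    lt_top_iff_ne_top.mpr (fun h => hRS (Subgroup.subgroupOf_eq_top.mp h))
  obtain ⟨n, hn_norm, hn_not⟩ := SetLike.exists_of_lt (hnc _ hlt)
  have hnS : (n : P) ∈ S := n.2
  obtain ⟨q, hq, r, hr, hqr⟩ := @mem_sup_of_normal P _ Q R hQn _ hnS
  -- `n` normalizes `R` inside `P`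
  have hn_normP : (n : P) ∈ Subgroup.normalizer (R : Set P) := by
    rw [Subgroup.mem_normalizer_iff]
    intro h
    constructor
    · intro hh
      have hhS : h ∈ S := Subgroup.mem_sup_right hh
      have h1 : (⟨h, hhS⟩ : ↥S) ∈ R.subgroupOf S := Subgroup.mem_subgroupOf.mpr hh
      have h2 := (Subgroup.mem_normalizer_iff.mp hn_norm ⟨h, hhS⟩).mp h1
      exact Subgroup.mem_subgroupOf.mp h2
    · intro hh
      have hhS : h ∈ S := by
        have h1 : (n : P) * h * (n : P)⁻¹ ∈ S := Subgroup.mem_sup_right hh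
        have h2 := mul_mem (mul_mem (inv_mem n.2) h1) n.2
        simpa [mul_assoc] using h2
      have h2 : (n * ⟨h, hhS⟩ * n⁻¹ : ↥S) ∈ R.subgroupOf S := by
        rw [Subgroup.mem_subgroupOf]
        exact hh
      have h3 := (Subgroup.mem_normalizer_iff.mp hn_norm ⟨h, hhS⟩).mpr h2
      exact Subgroup.mem_subgroupOf.mp h3
  have hu_norm : q ∈ Subgroup.normalizer (R : Set P) := by
    have hq' : q = (n : P) * r⁻¹ := by rw [← hqr]; group
    rw [hq']
    exact mul_mem hn_normP (inv_mem (Subgroup.le_normalizer hr))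
  have hu_not : q ∉ R := by
    intro hq'
    apply hn_not
    rw [Subgroup.mem_subgroupOf, ← hqr]
    exact mul_mem hq' hr
  -- conjugation by `q` as an automorphism of `R`
  set α : MulAut ↥R := conjAut R ⟨q, hu_norm⟩ with hα
  have hαmem : α ∈ ⨅ φ : ↥(F.Hom (⊤ : Subgroup P) R), pullK φ.1 (conjF ⊤ (img φ.1)) := by
    rw [Subgroup.mem_iInf]
    rintro ⟨φ, hφ⟩
    obtain ⟨ψ, hψF, hψQ, hψext⟩ := hN R φ hφ
    have hqS : q ∈ Q ⊔ R := Subgroup.mem_sup_left hq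
    set w : P := ((ψ ⟨q, hqS⟩ : ↥(⊤ : Subgroup P)) : P) with hw
    have hmemS : ∀ x : P, x ∈ R → x ∈ Q ⊔ R := fun x hx => Subgroup.mem_sup_right hx
    have hconj : ∀ (x : P) (hx : x ∈ Q ⊔ R) (hx' : q * x * q⁻¹ ∈ Q ⊔ R),
        ((ψ ⟨q * x * q⁻¹, hx'⟩ : ↥(⊤ : Subgroup P)) : P)
          = w * ((ψ ⟨x, hx⟩ : ↥(⊤ : Subgroup P)) : P) * w⁻¹ := by
      intro x hx hx'
      have he : (⟨q * x * q⁻¹, hx'⟩ : ↥(Q ⊔ R)) = ⟨q, hqS⟩ * ⟨x, hx⟩ * (⟨q, hqS⟩)⁻¹ := rfl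
      rw [he, map_mul, map_mul, map_inv]
      rfl
    have hconj' : ∀ (x : P) (hx : x ∈ Q ⊔ R) (hx' : q⁻¹ * x * q ∈ Q ⊔ R),
        ((ψ ⟨q⁻¹ * x * q, hx'⟩ : ↥(⊤ : Subgroup P)) : P)
          = w⁻¹ * ((ψ ⟨x, hx⟩ : ↥(⊤ : Subgroup P)) : P) * w := by
      intro x hx hx'
      have he : (⟨q⁻¹ * x * q, hx'⟩ : ↥(Q ⊔ R)) = (⟨q, hqS⟩)⁻¹ * ⟨x, hx⟩ * ⟨q, hqS⟩ := rfl
      rw [he, map_mul, map_mul, map_inv]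
      rfl
    have hψφ : ∀ (x : ↥R) (hx : (x : P) ∈ Q ⊔ R),
        ((ψ ⟨(x : P), hx⟩ : ↥(⊤ : Subgroup P)) : P) = ((φ x : ↥(⊤ : Subgroup P)) : P) :=
      fun x hx => by rw [hψext x hx]
    have hmem_img : ∀ y : P, y ∈ img φ ↔ ∃ x : ↥R, ((φ x : ↥(⊤ : Subgroup P)) : P) = y := by
      intro y
      simp only [img, Subgroup.mem_map, MonoidHom.mem_range, Subgroup.coe_subtype]
      constructor
      · rintro ⟨z, ⟨x, rfl⟩, rfl⟩; exact ⟨x, rfl⟩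
      · rintro ⟨x, rfl⟩; exact ⟨φ x, ⟨x, rfl⟩, rfl⟩
    have hw_norm : w ∈ Subgroup.normalizer (img φ : Set P) := by
      rw [Subgroup.mem_normalizer_iff]
      intro h
      rw [hmem_img, hmem_img]
      constructor
      · rintro ⟨x, rfl⟩
        have hx2 : q * (x : P) * q⁻¹ ∈ R :=
          (Subgroup.mem_normalizer_iff.mp hu_norm (x : P)).mp x.2
        refine ⟨⟨q * (x : P) * q⁻¹, hx2⟩, ?_⟩
        rw [← hψφ ⟨q * (x : P) * q⁻¹, hx2⟩ (hmemS _ hx2), ← hψφ x (hmemS _ x.2)]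
        exact hconj (x : P) (hmemS _ x.2) (hmemS _ hx2)
      · rintro ⟨x, hx⟩
        have hx2 : q⁻¹ * (x : P) * q ∈ R := by
          have := (Subgroup.mem_normalizer_iff.mp (inv_mem hu_norm) (x : P)).mp x.2
          simpa using this
        refine ⟨⟨q⁻¹ * (x : P) * q, hx2⟩, ?_⟩
        rw [← hψφ ⟨q⁻¹ * (x : P) * q, hx2⟩ (hmemS _ hx2)]
        have := hconj' (x : P) (hmemS _ x.2) (hmemS _ hx2)
        rw [this, hψφ x (hmemS _ x.2), hx]
        group
    apply Subgroup.subset_closure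
    refine ⟨conjHomN (img φ) ⟨w, hw_norm⟩, ?_, ?_⟩
    · exact ⟨⟨w, hw_norm⟩, Subgroup.mem_subgroupOf.mpr (Subgroup.mem_top _), rfl⟩
    · intro x
      apply Subtype.ext
      show ((φ (α x) : ↥(⊤ : Subgroup P)) : P) = w * ((φ x : ↥(⊤ : Subgroup P)) : P) * w⁻¹
      have hαx : ((α x : ↥R) : P) = q * (x : P) * q⁻¹ := rfl
      rw [← hψφ (α x) (hmemS _ (α x).2), ← hψφ x (hmemS _ x.2)]
      exact hconj (x : P) (hmemS _ x.2) (hmemS _ (α x).2)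
  rw [← hInt] at hαmem
  simp only [conjF, Subgroup.mem_map] at hαmem
  obtain ⟨v, hvR, hv⟩ := hαmem
  have hvmem : (v : P) ∈ R := Subgroup.mem_subgroupOf.mp hvR
  have hcent : ∀ x : ↥R, (v : P) * (x : P) * (v : P)⁻¹ = q * (x : P) * q⁻¹ := by
    intro x
    have h0 := congrArg (fun f : MulAut ↥R => ((f x : ↥R) : P)) hv
    simpa [conjHomN, conjAut, hα] using h0
  set c : P := (v : P)⁻¹ * q with hc
  have hccent : c ∈ Subgroup.centralizer (R : Set P) := by
    rw [Subgroup.mem_centralizer_iff]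
    intro m hm
    have h2 : (v : P) * m * (v : P)⁻¹ = q * m * q⁻¹ := hcent ⟨m, hm⟩
    calc m * ((v : P)⁻¹ * q) = (v : P)⁻¹ * ((v : P) * m * (v : P)⁻¹) * q := by group
      _ = (v : P)⁻¹ * (q * m * q⁻¹) * q := by rw [h2]
      _ = (v : P)⁻¹ * q * m := by group
  have hcen := hSC ι hιmem
  rw [himgι] at hcen
  have hcR : c ∈ R := by
    rw [hcen] at hccent
    obtain ⟨z, _, hz⟩ := hccent
    rw [← hz]
    exact z.2
  apply hu_not
  have hq2 : q = (v : P) * c := by rw [hc]; group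
  rw [hq2]
  exact mul_mem hvmem hcR

end Puig
end
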